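/- arXiv:1405.4093 — 5 statements merged into one kernel-verified Lean document; each statement's English description precedes it below -/
import Mathlib

section
/- Let Γ^r be the fine Z^{1+k+r} × Z_2^{q}-grading (q = m-2r) of the Heisenberg superalgebra H_{n,m}, n = 2k+1, given by a homogeneous basis {z, e_i, ê_i, u_j, v_j, z_l} with nonzero brackets [e_i,ê_i] = [u_j,v_j] = [z_l,z_l] = z. Then its Weyl group satisfies W(Γ^r) ≅ Z_2^{r+k} ⋊ (S_k × S_r × S_q). -/
abbrev SupIdx (k r q : ℕ) := ((Fin k × Bool) ⊕ Unit) ⊕ ((Fin r × Bool) ⊕ Fin q)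

def SupPair {k r q : ℕ} (p p' : SupIdx k r q) : Prop :=
  (∃ i : Fin k, ∃ s : Bool,
    p = Sum.inl (Sum.inl (i, s)) ∧ p' = Sum.inl (Sum.inl (i, !s))) ∨
  (∃ j : Fin r, ∃ s : Bool,
    p = Sum.inr (Sum.inl (j, s)) ∧ p' = Sum.inr (Sum.inl (j, !s))) ∨
  (∃ l : Fin q, p = Sum.inr (Sum.inr l) ∧ p' = Sum.inr (Sum.inr l))

def b2z : Bool → Multiplicative (ZMod 2)
  | false => 1
  | true => Multiplicative.ofAdd 1

def z2b (x : Multiplicative (ZMod 2)) : Bool := decide (x = Multiplicative.ofAdd 1)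

lemma z2b_b2z (b : Bool) : z2b (b2z b) = b := by
  cases b <;> simp [z2b, b2z] <;> decide

lemma b2z_z2b (x : Multiplicative (ZMod 2)) : b2z (z2b x) = x := by
  revert x; decide

lemma b2z_xor (a b : Bool) : b2z (xor a b) = b2z a * b2z b := by
  cases a <;> cases b <;> simp [b2z] <;> decide

lemma b2z_eq_one_iff (b : Bool) : b2z b = 1 ↔ b = false := by
  cases b <;> simp [b2z] <;> decide

def mPerm {k r q : ℕ} (σ : Equiv.Perm (Fin k)) (ε : Fin k → Bool)
    (τ : Equiv.Perm (Fin r)) (δ : Fin r → Bool) (ρ : Equiv.Perm (Fin q)) :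
    Equiv.Perm (SupIdx k r q) where
  toFun p := match p with
    | .inl (.inl (i, s)) => .inl (.inl (σ i, xor s (ε i)))
    | .inl (.inr ()) => .inl (.inr ())
    | .inr (.inl (j, s)) => .inr (.inl (τ j, xor s (δ j)))
    | .inr (.inr l) => .inr (.inr (ρ l))
  invFun p := match p with
    | .inl (.inl (i, s)) => .inl (.inl (σ⁻¹ i, xor s (ε (σ⁻¹ i))))
    | .inl (.inr ()) => .inl (.inr ())
    | .inr (.inl (j, s)) => .inr (.inl (τ⁻¹ j, xor s (δ (τ⁻¹ j))))
    | .inr (.inr l) => .inr (.inr (ρ⁻¹ l))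
  left_inv p := by
    rcases p with ((⟨i, s⟩ | ⟨⟩) | (⟨j, s⟩ | l)) <;>
      simp [Equiv.Perm.inv_def, Bool.xor_assoc]
  right_inv p := by
    rcases p with ((⟨i, s⟩ | ⟨⟩) | (⟨j, s⟩ | l)) <;>
      simp [Equiv.Perm.inv_def, Bool.xor_assoc]

lemma mPerm_k {k r q : ℕ} (σ : Equiv.Perm (Fin k)) (ε : Fin k → Bool)
    (τ : Equiv.Perm (Fin r)) (δ : Fin r → Bool) (ρ : Equiv.Perm (Fin q)) (i : Fin k) (s : Bool) :
    mPerm σ ε τ δ ρ (Sum.inl (Sum.inl (i, s))) = Sum.inl (Sum.inl (σ i, xor s (ε i))) := rfl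

lemma mPerm_z {k r q : ℕ} (σ : Equiv.Perm (Fin k)) (ε : Fin k → Bool)
    (τ : Equiv.Perm (Fin r)) (δ : Fin r → Bool) (ρ : Equiv.Perm (Fin q)) :
    mPerm σ ε τ δ ρ (Sum.inl (Sum.inr ())) = Sum.inl (Sum.inr ()) := rfl

lemma mPerm_r {k r q : ℕ} (σ : Equiv.Perm (Fin k)) (ε : Fin k → Bool)
    (τ : Equiv.Perm (Fin r)) (δ : Fin r → Bool) (ρ : Equiv.Perm (Fin q)) (j : Fin r) (s : Bool) :
    mPerm σ ε τ δ ρ (Sum.inr (Sum.inl (j, s))) = Sum.inr (Sum.inl (τ j, xor s (δ j))) := rfl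

lemma mPerm_q {k r q : ℕ} (σ : Equiv.Perm (Fin k)) (ε : Fin k → Bool)
    (τ : Equiv.Perm (Fin r)) (δ : Fin r → Bool) (ρ : Equiv.Perm (Fin q)) (l : Fin q) :
    mPerm σ ε τ δ ρ (Sum.inr (Sum.inr l)) = Sum.inr (Sum.inr (ρ l)) := rfl

lemma mPerm_symm {k r q : ℕ} (σ : Equiv.Perm (Fin k)) (ε : Fin k → Bool)
    (τ : Equiv.Perm (Fin r)) (δ : Fin r → Bool) (ρ : Equiv.Perm (Fin q)) :
    (mPerm σ ε τ δ ρ).symm = mPerm σ⁻¹ (fun i => ε (σ⁻¹ i)) τ⁻¹ (fun j => δ (τ⁻¹ j)) ρ⁻¹ := by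
  apply Equiv.ext
  intro p
  rcases p with ((⟨i, s⟩ | ⟨⟩) | (⟨j, s⟩ | l)) <;> rfl

lemma mPerm_pair {k r q : ℕ} {σ : Equiv.Perm (Fin k)} {ε : Fin k → Bool}
    {τ : Equiv.Perm (Fin r)} {δ : Fin r → Bool} {ρ : Equiv.Perm (Fin q)}
    {p p' : SupIdx k r q} (h : SupPair p p') :
    SupPair (mPerm σ ε τ δ ρ p) (mPerm σ ε τ δ ρ p') := by
  rcases h with ⟨i, s, rfl, rfl⟩ | ⟨j, s, rfl, rfl⟩ | ⟨l, rfl, rfl⟩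
  · refine Or.inl ⟨σ i, xor s (ε i), rfl, ?_⟩
    rw [mPerm_k]
    have hb : xor (!s) (ε i) = !(xor s (ε i)) := by cases s <;> cases (ε i) <;> rfl
    rw [hb]
  · refine Or.inr (Or.inl ⟨τ j, xor s (δ j), rfl, ?_⟩)
    rw [mPerm_r]
    have hb : xor (!s) (δ j) = !(xor s (δ j)) := by cases s <;> cases (δ j) <;> rfl
    rw [hb]
  · exact Or.inr (Or.inr ⟨ρ l, rfl, rfl⟩)

lemma mPerm_pair_iff {k r q : ℕ} {σ : Equiv.Perm (Fin k)} {ε : Fin k → Bool}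
    {τ : Equiv.Perm (Fin r)} {δ : Fin r → Bool} {ρ : Equiv.Perm (Fin q)}
    {p p' : SupIdx k r q} :
    SupPair (mPerm σ ε τ δ ρ p) (mPerm σ ε τ δ ρ p') ↔ SupPair p p' := by
  refine ⟨fun h => ?_, mPerm_pair⟩
  have := mPerm_pair (σ := σ⁻¹) (ε := fun i => ε (σ⁻¹ i)) (τ := τ⁻¹)
    (δ := fun j => δ (τ⁻¹ j)) (ρ := ρ⁻¹) h
  rwa [← mPerm_symm, Equiv.symm_apply_apply, Equiv.symm_apply_apply] at this

def domAct {k r : ℕ} (e : Equiv.Perm (Fin k ⊕ Fin r)) :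
    MulAut ((Fin k ⊕ Fin r) → Multiplicative (ZMod 2)) where
  toFun x := x ∘ e.symm
  invFun x := x ∘ e
  left_inv x := by ext a; simp
  right_inv x := by ext a; simp
  map_mul' x y := rfl

def permHom {k r q : ℕ} :
    (Equiv.Perm (Fin k) × Equiv.Perm (Fin r) × Equiv.Perm (Fin q)) →*
      MulAut ((Fin k ⊕ Fin r) → Multiplicative (ZMod 2)) where
  toFun σ := domAct (Equiv.sumCongr σ.1 σ.2.1)
  map_one' := by
    ext x a
    simp [domAct]
    rfl
  map_mul' σ σ' := by
    ext x a
    simp [domAct, Equiv.sumCongr_symm]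
    rfl

lemma permHom_inl {k r q : ℕ}
    (σ : Equiv.Perm (Fin k) × Equiv.Perm (Fin r) × Equiv.Perm (Fin q))
    (x : (Fin k ⊕ Fin r) → Multiplicative (ZMod 2)) (i : Fin k) :
    permHom (q := q) σ x (Sum.inl i) = x (Sum.inl (σ.1⁻¹ i)) := rfl

lemma permHom_inr {k r q : ℕ}
    (σ : Equiv.Perm (Fin k) × Equiv.Perm (Fin r) × Equiv.Perm (Fin q))
    (x : (Fin k ⊕ Fin r) → Multiplicative (ZMod 2)) (j : Fin r) :
    permHom (q := q) σ x (Sum.inr j) = x (Sum.inr (σ.2.1⁻¹ j)) := rfl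

/-- The Weyl group of the fine grading `Γ^r` of the Heisenberg superalgebra
`H_{n,m}` (homogeneous basis `{z, e_i, ê_i, u_j, v_j, z_l}`, `n = 2k+1`,
`q = m - 2r`) is `ℤ_2^{r+k} ⋊ (S_k × S_r × S_q)`: there is a homomorphism
from the group of (super)automorphisms permuting the one-dimensional
homogeneous components onto the semidirect product (the symmetric groups
permuting the corresponding factors of `ℤ_2^{k+r}`) with kernel exactly the
stabilizer of the grading. -/
theorem heisenberg_superalgebra_fine_grading_weyl_group
    (F : Type*) [Field F] [IsAlgClosed F] (hchar : (2 : F) ≠ 0)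
    (L : Type*) [AddCommGroup L] [Module F L]
    (E0 E1 : Submodule F L) (hcompl : IsCompl E0 E1)
    (k r q : ℕ)
    (c : Module.Basis (SupIdx k r q) F L)
    (heven : ∀ p : (Fin k × Bool) ⊕ Unit, c (Sum.inl p) ∈ E0)
    (hodd : ∀ p : (Fin r × Bool) ⊕ Fin q, c (Sum.inr p) ∈ E1)
    (br : L →ₗ[F] L →ₗ[F] L)
    (hee : ∀ i : Fin k, br (c (Sum.inl (Sum.inl (i, false)))) (c (Sum.inl (Sum.inl (i, true))))
      = c (Sum.inl (Sum.inr ())))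
    (heem : ∀ i : Fin k, br (c (Sum.inl (Sum.inl (i, true)))) (c (Sum.inl (Sum.inl (i, false))))
      = -c (Sum.inl (Sum.inr ())))
    (huv : ∀ j : Fin r, ∀ s : Bool, br (c (Sum.inr (Sum.inl (j, s)))) (c (Sum.inr (Sum.inl (j, !s))))
      = c (Sum.inl (Sum.inr ())))
    (hzz : ∀ l : Fin q, br (c (Sum.inr (Sum.inr l))) (c (Sum.inr (Sum.inr l)))
      = c (Sum.inl (Sum.inr ())))
    (h0 : ∀ p p' : SupIdx k r q, ¬ SupPair p p' → br (c p) (c p') = 0)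
    -- the homogeneous components of Γ^r
    (C : SupIdx k r q → Submodule F L) (hC : ∀ p, C p = F ∙ c p) :
    ∃ AutΓ : Subgroup (L ≃ₗ[F] L),
      (↑AutΓ = {f : L ≃ₗ[F] L |
        (∀ x y : L, f (br x y) = br (f x) (f y)) ∧
        E0.map (f : L →ₗ[F] L) = E0 ∧ E1.map (f : L →ₗ[F] L) = E1 ∧
        ∀ p, ∃ p', (C p).map (f : L →ₗ[F] L) = C p'}) ∧
      ∃ φ : (Equiv.Perm (Fin k) × Equiv.Perm (Fin r) × Equiv.Perm (Fin q)) →*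
          MulAut ((Fin k ⊕ Fin r) → Multiplicative (ZMod 2)),
        (∀ σ (x : (Fin k ⊕ Fin r) → Multiplicative (ZMod 2)) (i : Fin k),
          φ σ x (Sum.inl i) = x (Sum.inl (σ.1⁻¹ i))) ∧
        (∀ σ (x : (Fin k ⊕ Fin r) → Multiplicative (ZMod 2)) (j : Fin r),
          φ σ x (Sum.inr j) = x (Sum.inr (σ.2.1⁻¹ j))) ∧
        ∃ θ : AutΓ →* SemidirectProduct ((Fin k ⊕ Fin r) → Multiplicative (ZMod 2))
            (Equiv.Perm (Fin k) × Equiv.Perm (Fin r) × Equiv.Perm (Fin q)) φ,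
          Function.Surjective θ ∧
          ∀ f : AutΓ, θ f = 1 ↔
            ∀ p, (C p).map ((f : L ≃ₗ[F] L) : L →ₗ[F] L) = C p := by
  classical
  have hcne : ∀ p : SupIdx k r q, c p ≠ 0 := fun p => c.ne_zero p
  -- injectivity of the components
  have hCinj : ∀ p p' : SupIdx k r q, C p = C p' → p = p' := by
    intro p p' h
    by_contra hne
    rw [hC, hC] at h
    have h1 : c p ∈ (F ∙ c p') := h ▸ Submodule.mem_span_singleton_self (c p)
    obtain ⟨a, ha⟩ := Submodule.mem_span_singleton.mp h1
    have h2 := congrArg c.repr ha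
    rw [map_smul, Module.Basis.repr_self, Module.Basis.repr_self] at h2
    have h3 := congrArg (fun g => g p) h2
    simp [Finsupp.single_apply, Ne.symm hne] at h3
  have hmapC : ∀ (f : L ≃ₗ[F] L) (p : SupIdx k r q),
      (C p).map (f : L →ₗ[F] L) = Submodule.span F {f (c p)} := by
    intro f p
    rw [hC]
    rw [Submodule.map_span, Set.image_singleton]
    rfl
  -- E0 and E1 are spanned by the even resp. odd basis vectors
  have hABspan : E0 = Submodule.span F
        (Set.range fun p : (Fin k × Bool) ⊕ Unit => c (Sum.inl p)) ∧
      E1 = Submodule.span F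
        (Set.range fun p : (Fin r × Bool) ⊕ Fin q => c (Sum.inr p)) := by
    set A := Submodule.span F (Set.range fun p : (Fin k × Bool) ⊕ Unit => c (Sum.inl p)) with hA
    set B := Submodule.span F (Set.range fun p : (Fin r × Bool) ⊕ Fin q => c (Sum.inr p)) with hB
    have hA0 : A ≤ E0 := Submodule.span_le.mpr (by rintro x ⟨p, rfl⟩; exact heven p)
    have hB1 : B ≤ E1 := Submodule.span_le.mpr (by rintro x ⟨p, rfl⟩; exact hodd p)
    have hAB : A ⊔ B = ⊤ := by
      rw [eq_top_iff, ← c.span_eq]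
      apply Submodule.span_le.mpr
      rintro x ⟨p, rfl⟩
      rcases p with p | p
      · exact Submodule.mem_sup_left (Submodule.subset_span ⟨p, rfl⟩)
      · exact Submodule.mem_sup_right (Submodule.subset_span ⟨p, rfl⟩)
    have hE0B : E0 ⊓ B = ⊥ := by
      rw [eq_bot_iff]
      refine le_trans (inf_le_inf_left E0 hB1) ?_
      rw [hcompl.inf_eq_bot]
    have hE1A : E1 ⊓ A = ⊥ := by
      rw [eq_bot_iff]
      refine le_trans (inf_le_inf_left E1 hA0) ?_
      rw [inf_comm, hcompl.inf_eq_bot]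
    constructor
    · have h1 := inf_sup_assoc_of_le (α := Submodule F L) B hA0
      rw [hE0B, bot_sup_eq, sup_comm B A, hAB, inf_top_eq] at h1
      exact h1.symm
    · have h1 := inf_sup_assoc_of_le (α := Submodule F L) A hB1
      rw [hE1A, bot_sup_eq, hAB, inf_top_eq] at h1
      exact h1.symm
  obtain ⟨hE0span, hE1span⟩ := hABspan
  -- the set of automorphisms
  let S : Set (L ≃ₗ[F] L) := {f : L ≃ₗ[F] L |
        (∀ x y : L, f (br x y) = br (f x) (f y)) ∧
        E0.map (f : L →ₗ[F] L) = E0 ∧ E1.map (f : L →ₗ[F] L) = E1 ∧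
        ∀ p, ∃ p', (C p).map (f : L →ₗ[F] L) = C p'}
  have honeS : (1 : L ≃ₗ[F] L) ∈ S := by
    refine ⟨fun x y => rfl, ?_, ?_, fun p => ⟨p, ?_⟩⟩ <;>
      · have h1 : ((1 : L ≃ₗ[F] L) : L →ₗ[F] L) = LinearMap.id := rfl
        rw [h1, Submodule.map_id]
  have hmulS : ∀ {f g : L ≃ₗ[F] L}, f ∈ S → g ∈ S → f * g ∈ S := by
    intro f g hf hg
    obtain ⟨hf1, hf2, hf3, hf4⟩ := hf
    obtain ⟨hg1, hg2, hg3, hg4⟩ := hg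
    have hco : ((f * g : L ≃ₗ[F] L) : L →ₗ[F] L)
        = (f : L →ₗ[F] L).comp (g : L →ₗ[F] L) := rfl
    refine ⟨fun x y => ?_, ?_, ?_, fun p => ?_⟩
    · show f (g (br x y)) = br (f (g x)) (f (g y))
      rw [hg1, hf1]
    · rw [hco, Submodule.map_comp, hg2, hf2]
    · rw [hco, Submodule.map_comp, hg3, hf3]
    · obtain ⟨p', hp'⟩ := hg4 p
      obtain ⟨p'', hp''⟩ := hf4 p'
      exact ⟨p'', by rw [hco, Submodule.map_comp, hp', hp'']⟩
  have hinvS : ∀ {f : L ≃ₗ[F] L}, f ∈ S → f⁻¹ ∈ S := by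
    intro f hf
    obtain ⟨hf1, hf2, hf3, hf4⟩ := hf
    have hid : ((f⁻¹ : L ≃ₗ[F] L) : L →ₗ[F] L).comp (f : L →ₗ[F] L) = LinearMap.id := by
      ext x; exact f.symm_apply_apply x
    have hinvmap : ∀ (U V : Submodule F L),
        U.map (f : L →ₗ[F] L) = V → V.map ((f⁻¹ : L ≃ₗ[F] L) : L →ₗ[F] L) = U := by
      intro U V h
      rw [← h, ← Submodule.map_comp, hid, Submodule.map_id]
    refine ⟨fun x y => ?_, hinvmap _ _ hf2, hinvmap _ _ hf3, fun p => ?_⟩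
    · apply f.injective
      rw [hf1]
      show f (f.symm (br x y)) = br (f (f.symm x)) (f (f.symm y))
      rw [f.apply_symm_apply, f.apply_symm_apply, f.apply_symm_apply]
    · choose gmap hgmap using hf4
      have hmapinj : Function.Injective (Submodule.map (f : L →ₗ[F] L)) :=
        Submodule.map_injective_of_injective
          (show Function.Injective ((f : L →ₗ[F] L)) from f.injective)
      have hginj : Function.Injective gmap := by
        intro a b hab
        apply hCinj
        apply hmapinj
        rw [hgmap a, hgmap b, hab]
      obtain ⟨p₀, hp₀⟩ := Finite.injective_iff_surjective.mp hginj p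
      exact ⟨p₀, hinvmap _ _ (by rw [hgmap p₀, hp₀])⟩
  let AutΓ : Subgroup (L ≃ₗ[F] L) :=
    { carrier := S
      mul_mem' := hmulS
      one_mem' := honeS
      inv_mem' := hinvS }
  refine ⟨AutΓ, rfl, permHom, fun σ x i => rfl, fun σ x j => rfl, ?_⟩
  have hmem : ∀ f : AutΓ, ((f : L ≃ₗ[F] L) ∈ S) := fun f => f.2
  have hbrf : ∀ (f : AutΓ) (x y : L), (f : L ≃ₗ[F] L) (br x y)
      = br ((f : L ≃ₗ[F] L) x) ((f : L ≃ₗ[F] L) y) := fun f => (hmem f).1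
  have hE0f : ∀ f : AutΓ, E0.map ((f : L ≃ₗ[F] L) : L →ₗ[F] L) = E0 := fun f => (hmem f).2.1
  have hE1f : ∀ f : AutΓ, E1.map ((f : L ≃ₗ[F] L) : L →ₗ[F] L) = E1 := fun f => (hmem f).2.2.1
  have hPex : ∀ (f : AutΓ) (p : SupIdx k r q),
      ∃ p', (C p).map ((f : L ≃ₗ[F] L) : L →ₗ[F] L) = C p' := fun f => (hmem f).2.2.2
  choose P hPdef using hPex
  have hPuniq : ∀ (f : AutΓ) (p p' : SupIdx k r q),
      (C p).map ((f : L ≃ₗ[F] L) : L →ₗ[F] L) = C p' → P f p = p' :=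
    fun f p p' h => hCinj _ _ ((hPdef f p).symm.trans h)
  have hPone : ∀ p, P 1 p = p := by
    intro p
    apply hPuniq
    have h1 : (((1 : AutΓ) : L ≃ₗ[F] L) : L →ₗ[F] L) = LinearMap.id := rfl
    rw [h1, Submodule.map_id]
  have hPmul : ∀ (f g : AutΓ) (p : SupIdx k r q), P (f * g) p = P f (P g p) := by
    intro f g p
    apply hPuniq
    have hco : (((f * g : AutΓ) : L ≃ₗ[F] L) : L →ₗ[F] L)
        = ((f : L ≃ₗ[F] L) : L →ₗ[F] L).comp ((g : L ≃ₗ[F] L) : L →ₗ[F] L) := rfl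
    rw [hco, Submodule.map_comp, hPdef, hPdef]
  have hPinvl : ∀ (f : AutΓ) (p : SupIdx k r q), P f⁻¹ (P f p) = p := by
    intro f p
    rw [← hPmul, inv_mul_cancel, hPone]
  have hPinj : ∀ f : AutΓ, Function.Injective (P f) := by
    intro f a b h
    have h2 := congrArg (P f⁻¹) h
    rwa [hPinvl, hPinvl] at h2
  have hPsurj : ∀ f : AutΓ, Function.Surjective (P f) := by
    intro f p
    refine ⟨P f⁻¹ p, ?_⟩
    have h2 := hPinvl f⁻¹ p
    rwa [inv_inv] at h2
  have hscal : ∀ (f : AutΓ) (p : SupIdx k r q),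
      ∃ a : F, a ≠ 0 ∧ (f : L ≃ₗ[F] L) (c p) = a • c (P f p) := by
    intro f p
    have h1 : (f : L ≃ₗ[F] L) (c p) ∈ (C p).map ((f : L ≃ₗ[F] L) : L →ₗ[F] L) :=
      Submodule.mem_map_of_mem (by rw [hC]; exact Submodule.mem_span_singleton_self _)
    rw [hPdef, hC] at h1
    obtain ⟨a, ha⟩ := Submodule.mem_span_singleton.mp h1
    refine ⟨a, ?_, ha.symm⟩
    rintro rfl
    rw [zero_smul] at ha
    exact hcne p ((f : L ≃ₗ[F] L).map_eq_zero_iff.mp ha.symm)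
  choose sc hsc0 hscdef using hscal
  have hpair_br : ∀ p p' : SupIdx k r q, SupPair p p' → br (c p) (c p') ≠ 0 := by
    rintro p p' (⟨i, s, rfl, rfl⟩ | ⟨j, s, rfl, rfl⟩ | ⟨l, rfl, rfl⟩)
    · cases s
      · simp only [Bool.not_false]
        rw [hee]
        exact hcne _
      · simp only [Bool.not_true]
        rw [heem]
        exact neg_ne_zero.mpr (hcne _)
    · rw [huv]
      exact hcne _
    · rw [hzz]
      exact hcne _
  have hPpair : ∀ (f : AutΓ) (p p' : SupIdx k r q),
      SupPair p p' → SupPair (P f p) (P f p') := by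
    intro f p p' hpp
    by_contra hnot
    have h2 := hbrf f (c p) (c p')
    rw [hscdef f p, hscdef f p', map_smul, LinearMap.map_smul₂, h0 _ _ hnot,
      smul_zero, smul_zero] at h2
    exact hpair_br p p' hpp ((f : L ≃ₗ[F] L).map_eq_zero_iff.mp h2)
  have hPpair_iff : ∀ (f : AutΓ) (p p' : SupIdx k r q),
      SupPair (P f p) (P f p') ↔ SupPair p p' := by
    intro f p p'
    refine ⟨fun h => ?_, hPpair f p p'⟩
    have h2 := hPpair f⁻¹ _ _ h
    rwa [hPinvl, hPinvl] at h2
  have hPeven : ∀ (f : AutΓ) (x : (Fin k × Bool) ⊕ Unit),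
      ∃ x', P f (Sum.inl x) = Sum.inl x' := by
    intro f x
    rcases hqq : P f (Sum.inl x) with x' | x'
    · exact ⟨x', rfl⟩
    · exfalso
      have h1 : (f : L ≃ₗ[F] L) (c (Sum.inl x)) ∈ E0 := by
        have h2 := Submodule.mem_map_of_mem (f := ((f : L ≃ₗ[F] L) : L →ₗ[F] L)) (heven x)
        rwa [hE0f] at h2
      rw [hscdef f (Sum.inl x), hqq] at h1
      have h2 : sc f (Sum.inl x) • c (Sum.inr x') ∈ E1 := Submodule.smul_mem _ _ (hodd x')
      have h3 := Submodule.disjoint_def.mp hcompl.disjoint _ h1 h2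
      exact smul_ne_zero (hsc0 f (Sum.inl x)) (hcne _) h3
  have hPodd : ∀ (f : AutΓ) (x : (Fin r × Bool) ⊕ Fin q),
      ∃ x', P f (Sum.inr x) = Sum.inr x' := by
    intro f x
    rcases hqq : P f (Sum.inr x) with x' | x'
    · exfalso
      have h1 : (f : L ≃ₗ[F] L) (c (Sum.inr x)) ∈ E1 := by
        have h2 := Submodule.mem_map_of_mem (f := ((f : L ≃ₗ[F] L) : L →ₗ[F] L)) (hodd x)
        rwa [hE1f] at h2
      rw [hscdef f (Sum.inr x), hqq] at h1
      have h2 : sc f (Sum.inr x) • c (Sum.inl x') ∈ E0 := Submodule.smul_mem _ _ (heven x')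
      have h3 := Submodule.disjoint_def.mp hcompl.disjoint _ h2 h1
      exact smul_ne_zero (hsc0 f (Sum.inr x)) (hcne _) h3
    · exact ⟨x', rfl⟩
  have hznopair : ∀ p' : SupIdx k r q, ¬ SupPair (Sum.inl (Sum.inr ())) p' := by
    rintro p' (⟨i, s, h, -⟩ | ⟨j, s, h, -⟩ | ⟨l, h, -⟩) <;> simp at h
  have hPz : ∀ f : AutΓ, P f (Sum.inl (Sum.inr ())) = Sum.inl (Sum.inr ()) := by
    intro f
    obtain ⟨x', hx'⟩ := hPeven f (Sum.inr ())
    rcases x' with ⟨i, s⟩ | u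
    · exfalso
      obtain ⟨p', hp'⟩ := hPsurj f (Sum.inl (Sum.inl (i, !s)))
      have hsp : SupPair (P f (Sum.inl (Sum.inr ()))) (P f p') := by
        rw [hx', hp']
        exact Or.inl ⟨i, s, rfl, rfl⟩
      exact hznopair p' ((hPpair_iff f _ _).mp hsp)
    · rw [hx']
  have hPkex : ∀ (f : AutΓ) (i : Fin k) (s : Bool),
      ∃ i' s', P f (Sum.inl (Sum.inl (i, s))) = Sum.inl (Sum.inl (i', s')) := by
    intro f i s
    obtain ⟨x', hx'⟩ := hPeven f (Sum.inl (i, s))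
    rcases x' with ⟨i', s'⟩ | u
    · exact ⟨i', s', hx'⟩
    · exfalso
      have h1 : Sum.inl (Sum.inl (i, s)) = (Sum.inl (Sum.inr ()) : SupIdx k r q) :=
        hPinj f (by rw [hx', hPz f])
      simp at h1
  have hPrex : ∀ (f : AutΓ) (j : Fin r) (s : Bool),
      ∃ j' s', P f (Sum.inr (Sum.inl (j, s))) = Sum.inr (Sum.inl (j', s')) := by
    intro f j s
    obtain ⟨x', hx'⟩ := hPodd f (Sum.inl (j, s))
    rcases x' with ⟨j', s'⟩ | l'
    · exact ⟨j', s', hx'⟩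
    · exfalso
      have hsp : SupPair (Sum.inr (Sum.inl (j, s)) : SupIdx k r q) (Sum.inr (Sum.inl (j, s))) := by
        apply (hPpair_iff f _ _).mp
        rw [hx']
        exact Or.inr (Or.inr ⟨l', rfl, rfl⟩)
      rcases hsp with ⟨i'', s'', h1, h2⟩ | ⟨j'', s'', h1, h2⟩ | ⟨l'', h1, h2⟩
      · simp at h1
      · simp only [Sum.inr.injEq, Sum.inl.injEq, Prod.mk.injEq] at h1 h2
        obtain ⟨hj1, hs1⟩ := h1
        obtain ⟨hj2, hs2⟩ := h2
        rw [hs1] at hs2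
        exact absurd hs2 (by cases s'' <;> simp)
      · simp at h1
  have hPqex : ∀ (f : AutΓ) (l : Fin q),
      ∃ l', P f (Sum.inr (Sum.inr l)) = Sum.inr (Sum.inr l') := by
    intro f l
    obtain ⟨x', hx'⟩ := hPodd f (Sum.inr l)
    rcases x' with ⟨j', s'⟩ | l'
    · exfalso
      have hsp : SupPair (P f (Sum.inr (Sum.inr l))) (P f (Sum.inr (Sum.inr l))) :=
        hPpair f _ _ (Or.inr (Or.inr ⟨l, rfl, rfl⟩))
      rw [hx'] at hsp
      rcases hsp with ⟨i'', s'', h1, h2⟩ | ⟨j'', s'', h1, h2⟩ | ⟨l'', h1, h2⟩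
      · simp at h1
      · simp only [Sum.inr.injEq, Sum.inl.injEq, Prod.mk.injEq] at h1 h2
        obtain ⟨hj1, hs1⟩ := h1
        obtain ⟨hj2, hs2⟩ := h2
        rw [hs1] at hs2
        exact absurd hs2 (by cases s'' <;> simp)
      · simp at h1
    · exact ⟨l', hx'⟩
  choose σK εK hK using hPkex
  choose τK δK hR using hPrex
  choose ρK hQ using hPqex
  have hKfull : ∀ (f : AutΓ) (i : Fin k) (s : Bool),
      P f (Sum.inl (Sum.inl (i, s)))
        = Sum.inl (Sum.inl (σK f i false, xor s (εK f i false))) := by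
    intro f i s
    cases s
    · rw [hK f i false]
      simp
    · have hsp : SupPair (P f (Sum.inl (Sum.inl (i, false)))) (P f (Sum.inl (Sum.inl (i, true)))) :=
        hPpair f _ _ (Or.inl ⟨i, false, rfl, rfl⟩)
      rw [hK f i false, hK f i true] at hsp
      rcases hsp with ⟨i', s', h1, h2⟩ | ⟨j', s', h1, h2⟩ | ⟨l', h1, h2⟩
      · simp only [Sum.inl.injEq, Prod.mk.injEq] at h1 h2
        rw [hK f i true, h2.1, h2.2, h1.1, h1.2]
        simp
      · simp at h1
      · simp at h1
  have hRfull : ∀ (f : AutΓ) (j : Fin r) (s : Bool),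
      P f (Sum.inr (Sum.inl (j, s)))
        = Sum.inr (Sum.inl (τK f j false, xor s (δK f j false))) := by
    intro f j s
    cases s
    · rw [hR f j false]
      simp
    · have hsp : SupPair (P f (Sum.inr (Sum.inl (j, false)))) (P f (Sum.inr (Sum.inl (j, true)))) :=
        hPpair f _ _ (Or.inr (Or.inl ⟨j, false, rfl, rfl⟩))
      rw [hR f j false, hR f j true] at hsp
      rcases hsp with ⟨i', s', h1, h2⟩ | ⟨j', s', h1, h2⟩ | ⟨l', h1, h2⟩
      · simp at h1
      · simp only [Sum.inr.injEq, Sum.inl.injEq, Prod.mk.injEq] at h1 h2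
        rw [hR f j true, h2.1, h2.2, h1.1, h1.2]
        simp
      · simp at h1
  have hσinj : ∀ f : AutΓ, Function.Injective (fun i => σK f i false) := by
    intro f i i' h
    simp only at h
    by_cases hε : εK f i false = εK f i' false
    · have h1 : P f (Sum.inl (Sum.inl (i, false))) = P f (Sum.inl (Sum.inl (i', false))) := by
        rw [hKfull, hKfull, h, hε]
      have h2 := hPinj f h1
      simp only [Sum.inl.injEq, Prod.mk.injEq] at h2
      exact h2.1
    · exfalso
      have hb : εK f i false = !(εK f i' false) := by
        revert hε
        cases εK f i false <;> cases εK f i' false <;> decide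
      have h1 : P f (Sum.inl (Sum.inl (i, false))) = P f (Sum.inl (Sum.inl (i', true))) := by
        rw [hKfull, hKfull, h, hb]
        simp
      have h2 := hPinj f h1
      simp at h2
  have hτinj : ∀ f : AutΓ, Function.Injective (fun j => τK f j false) := by
    intro f j j' h
    simp only at h
    by_cases hδ : δK f j false = δK f j' false
    · have h1 : P f (Sum.inr (Sum.inl (j, false))) = P f (Sum.inr (Sum.inl (j', false))) := by
        rw [hRfull, hRfull, h, hδ]
      have h2 := hPinj f h1
      simp only [Sum.inr.injEq, Sum.inl.injEq, Prod.mk.injEq] at h2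
      exact h2.1
    · exfalso
      have hb : δK f j false = !(δK f j' false) := by
        revert hδ
        cases δK f j false <;> cases δK f j' false <;> decide
      have h1 : P f (Sum.inr (Sum.inl (j, false))) = P f (Sum.inr (Sum.inl (j', true))) := by
        rw [hRfull, hRfull, h, hb]
        simp
      have h2 := hPinj f h1
      simp at h2
  have hρinj : ∀ f : AutΓ, Function.Injective (ρK f) := by
    intro f a b h
    have h1 : P f (Sum.inr (Sum.inr a)) = P f (Sum.inr (Sum.inr b)) := by rw [hQ, hQ, h]
    have h2 := hPinj f h1
    simp only [Sum.inr.injEq] at h2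
    exact h2
  have hσbij : ∀ f : AutΓ, Function.Bijective (fun i => σK f i false) :=
    fun f => Finite.injective_iff_bijective.mp (hσinj f)
  have hτbij : ∀ f : AutΓ, Function.Bijective (fun j => τK f j false) :=
    fun f => Finite.injective_iff_bijective.mp (hτinj f)
  have hρbij : ∀ f : AutΓ, Function.Bijective (ρK f) :=
    fun f => Finite.injective_iff_bijective.mp (hρinj f)
  have hKmul : ∀ (f g : AutΓ) (i : Fin k),
      σK (f * g) i false = σK f (σK g i false) false ∧
      εK (f * g) i false = xor (εK g i false) (εK f (σK g i false) false) := by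
    intro f g i
    have h1 : P (f * g) (Sum.inl (Sum.inl (i, false)))
        = Sum.inl (Sum.inl (σK f (σK g i false) false,
            xor (εK g i false) (εK f (σK g i false) false))) := by
      rw [hPmul, hKfull g i false]
      simp only [Bool.false_xor]
      exact hKfull f _ _
    rw [hKfull (f * g) i false] at h1
    simp only [Sum.inl.injEq, Prod.mk.injEq, Bool.false_xor] at h1
    exact h1
  have hRmul : ∀ (f g : AutΓ) (j : Fin r),
      τK (f * g) j false = τK f (τK g j false) false ∧
      δK (f * g) j false = xor (δK g j false) (δK f (τK g j false) false) := by
    intro f g j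
    have h1 : P (f * g) (Sum.inr (Sum.inl (j, false)))
        = Sum.inr (Sum.inl (τK f (τK g j false) false,
            xor (δK g j false) (δK f (τK g j false) false))) := by
      rw [hPmul, hRfull g j false]
      simp only [Bool.false_xor]
      exact hRfull f _ _
    rw [hRfull (f * g) j false] at h1
    simp only [Sum.inr.injEq, Sum.inl.injEq, Prod.mk.injEq, Bool.false_xor] at h1
    exact h1
  have hQmul : ∀ (f g : AutΓ) (l : Fin q), ρK (f * g) l = ρK f (ρK g l) := by
    intro f g l
    have h1 : P (f * g) (Sum.inr (Sum.inr l)) = Sum.inr (Sum.inr (ρK f (ρK g l))) := by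
      rw [hPmul, hQ g l, hQ f (ρK g l)]
    rw [hQ (f * g) l] at h1
    simp only [Sum.inr.injEq] at h1
    exact h1
  have hKone : ∀ i : Fin k, σK 1 i false = i ∧ εK 1 i false = false := by
    intro i
    have h1 := hKfull 1 i false
    rw [hPone] at h1
    simp only [Sum.inl.injEq, Prod.mk.injEq, Bool.false_xor] at h1
    exact ⟨h1.1.symm, h1.2.symm⟩
  have hRone : ∀ j : Fin r, τK 1 j false = j ∧ δK 1 j false = false := by
    intro j
    have h1 := hRfull 1 j false
    rw [hPone] at h1
    simp only [Sum.inr.injEq, Sum.inl.injEq, Prod.mk.injEq, Bool.false_xor] at h1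
    exact ⟨h1.1.symm, h1.2.symm⟩
  have hQone : ∀ l : Fin q, ρK 1 l = l := by
    intro l
    have h1 := hQ 1 l
    rw [hPone] at h1
    simp only [Sum.inr.injEq] at h1
    exact h1.symm
  let σE : AutΓ → Equiv.Perm (Fin k) := fun f => Equiv.ofBijective _ (hσbij f)
  let τE : AutΓ → Equiv.Perm (Fin r) := fun f => Equiv.ofBijective _ (hτbij f)
  let ρE : AutΓ → Equiv.Perm (Fin q) := fun f => Equiv.ofBijective _ (hρbij f)
  have hσE : ∀ (f : AutΓ) (i : Fin k), σE f i = σK f i false := fun f i => rfl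
  have hτE : ∀ (f : AutΓ) (j : Fin r), τE f j = τK f j false := fun f j => rfl
  have hρE : ∀ (f : AutΓ) (l : Fin q), ρE f l = ρK f l := fun f l => rfl
  have hσEmul : ∀ f g : AutΓ, σE (f * g) = σE f * σE g := by
    intro f g
    apply Equiv.ext
    intro i
    rw [Equiv.Perm.mul_apply, hσE, hσE, hσE]
    exact (hKmul f g i).1
  have hτEmul : ∀ f g : AutΓ, τE (f * g) = τE f * τE g := by
    intro f g
    apply Equiv.ext
    intro j
    rw [Equiv.Perm.mul_apply, hτE, hτE, hτE]
    exact (hRmul f g j).1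
  have hρEmul : ∀ f g : AutΓ, ρE (f * g) = ρE f * ρE g := by
    intro f g
    apply Equiv.ext
    intro l
    rw [Equiv.Perm.mul_apply, hρE, hρE, hρE]
    exact hQmul f g l
  let mf : AutΓ → ((Fin k ⊕ Fin r) → Multiplicative (ZMod 2)) := fun f =>
    Sum.elim (fun i => b2z (εK f ((σE f).symm i) false))
      (fun j => b2z (δK f ((τE f).symm j) false))
  have hmfmul : ∀ f g : AutΓ,
      mf (f * g) = mf f * (permHom (σE f, τE f, ρE f) (mf g)) := by
    intro f g
    funext a
    rcases a with i | j
    · have hsymm : (σE (f * g)).symm i = (σE g).symm ((σE f).symm i) := by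
        apply (σE (f * g)).injective
        rw [Equiv.apply_symm_apply, hσEmul, Equiv.Perm.mul_apply,
          Equiv.apply_symm_apply, Equiv.apply_symm_apply]
      show b2z (εK (f * g) ((σE (f * g)).symm i) false)
          = b2z (εK f ((σE f).symm i) false)
            * b2z (εK g ((σE g).symm ((σE f)⁻¹ i)) false)
      have hinv : (σE f)⁻¹ i = (σE f).symm i := rfl
      rw [hinv, hsymm]
      rw [(hKmul f g ((σE g).symm ((σE f).symm i))).2]
      have h3 : σK g ((σE g).symm ((σE f).symm i)) false = (σE f).symm i :=
        (σE g).apply_symm_apply _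
      rw [h3, b2z_xor, mul_comm]
    · have hsymm : (τE (f * g)).symm j = (τE g).symm ((τE f).symm j) := by
        apply (τE (f * g)).injective
        rw [Equiv.apply_symm_apply, hτEmul, Equiv.Perm.mul_apply,
          Equiv.apply_symm_apply, Equiv.apply_symm_apply]
      show b2z (δK (f * g) ((τE (f * g)).symm j) false)
          = b2z (δK f ((τE f).symm j) false)
            * b2z (δK g ((τE g).symm ((τE f)⁻¹ j)) false)
      have hinv : (τE f)⁻¹ j = (τE f).symm j := rfl
      rw [hinv, hsymm]
      rw [(hRmul f g ((τE g).symm ((τE f).symm j))).2]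
      have h3 : τK g ((τE g).symm ((τE f).symm j)) false = (τE f).symm j :=
        (τE g).apply_symm_apply _
      rw [h3, b2z_xor, mul_comm]
  have hσEone : σE 1 = 1 := by
    apply Equiv.ext
    intro i
    rw [hσE]
    simpa using (hKone i).1
  have hτEone : τE 1 = 1 := by
    apply Equiv.ext
    intro j
    rw [hτE]
    simpa using (hRone j).1
  have hρEone : ρE 1 = 1 := by
    apply Equiv.ext
    intro l
    rw [hρE]
    simpa using hQone l
  refine ⟨{ toFun := fun f => ⟨mf f, (σE f, τE f, ρE f)⟩
            map_one' := ?_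
            map_mul' := ?_ }, ?_, ?_⟩
  · refine SemidirectProduct.ext ?_ ?_
    · show mf 1 = 1
      funext a
      rcases a with i | j
      · show b2z (εK 1 ((σE 1).symm i) false) = 1
        rw [(hKone _).2]
        rfl
      · show b2z (δK 1 ((τE 1).symm j) false) = 1
        rw [(hRone _).2]
        rfl
    · show (σE 1, τE 1, ρE 1) = 1
      rw [hσEone, hτEone, hρEone]
      rfl
  · intro f g
    refine SemidirectProduct.ext ?_ ?_
    · show mf (f * g) = mf f * (permHom (σE f, τE f, ρE f) (mf g))
      exact hmfmul f g
    · show (σE (f * g), τE (f * g), ρE (f * g))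
        = ((σE f, τE f, ρE f) * (σE g, τE g, ρE g) :
          Equiv.Perm (Fin k) × Equiv.Perm (Fin r) × Equiv.Perm (Fin q))
      rw [hσEmul f g, hτEmul f g, hρEmul f g]
      rfl
  · -- surjectivity
    rintro ⟨n, σ, τ, ρ⟩
    set ε : Fin k → Bool := fun i => z2b (n (Sum.inl (σ i))) with hεdef
    set δ : Fin r → Bool := fun j => z2b (n (Sum.inr (τ j))) with hδdef
    set sg : SupIdx k r q → F := Sum.elim
      (Sum.elim (fun is : Fin k × Bool => if is.2 then 1 else if ε is.1 then (-1 : F) else 1)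
        (fun _ => 1))
      (Sum.elim (fun _ => (1 : F)) (fun _ => (1 : F))) with hsgdef
    have hsgk : ∀ (i : Fin k) (s : Bool),
        sg (Sum.inl (Sum.inl (i, s))) = if s then 1 else if ε i then -1 else 1 :=
      fun i s => by rw [hsgdef]; rfl
    have hsgz : sg (Sum.inl (Sum.inr ())) = 1 := by rw [hsgdef]; rfl
    have hsgr : ∀ x : (Fin r × Bool) ⊕ Fin q, sg (Sum.inr x) = 1 := by
      rintro (x | x) <;> (rw [hsgdef]; rfl)
    have hsg_ne : ∀ p, sg p ≠ 0 := by
      rintro ((⟨i, s⟩ | u) | x)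
      · rw [hsgk]
        split_ifs <;> simp
      · rw [hsgz]
        exact one_ne_zero
      · rw [hsgr]
        exact one_ne_zero
    have hsg_sq : ∀ p, sg p * sg p = 1 := by
      rintro ((⟨i, s⟩ | u) | x)
      · rw [hsgk]
        split_ifs <;> ring
      · rw [hsgz]
        ring
      · rw [hsgr]
        ring
    let A : L →ₗ[F] L := c.constr (M' := L) ℕ (fun p => sg p • c (mPerm σ ε τ δ ρ p))
    let B : L →ₗ[F] L := c.constr (M' := L) ℕ
      (fun p => sg ((mPerm σ ε τ δ ρ).symm p) • c ((mPerm σ ε τ δ ρ).symm p))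
    have hAc : ∀ p, A (c p) = sg p • c (mPerm σ ε τ δ ρ p) := fun p => c.constr_basis ℕ _ p
    have hBc : ∀ p, B (c p) = sg ((mPerm σ ε τ δ ρ).symm p) • c ((mPerm σ ε τ δ ρ).symm p) :=
      fun p => c.constr_basis ℕ _ p
    have hABid : A.comp B = LinearMap.id := by
      refine Module.Basis.ext c fun p => ?_
      rw [LinearMap.comp_apply, hBc, map_smul, hAc, smul_smul, Equiv.apply_symm_apply,
        hsg_sq, one_smul]
      rfl
    have hBAid : B.comp A = LinearMap.id := by
      refine Module.Basis.ext c fun p => ?_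
      rw [LinearMap.comp_apply, hAc, map_smul, hBc, smul_smul, Equiv.symm_apply_apply,
        hsg_sq, one_smul]
      rfl
    let fE : L ≃ₗ[F] L := LinearEquiv.ofLinear A B hABid hBAid
    have hfc : ∀ p, fE (c p) = sg p • c (mPerm σ ε τ δ ρ p) := fun p => hAc p
    have hfcl : ∀ p, ((fE : L ≃ₗ[F] L) : L →ₗ[F] L) (c p)
        = sg p • c (mPerm σ ε τ δ ρ p) := fun p => hAc p
    have hbr_basis : ∀ p p', fE (br (c p) (c p')) = br (fE (c p)) (fE (c p')) := by
      intro p p'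
      by_cases hpp : SupPair p p'
      · rcases hpp with ⟨i, s, rfl, rfl⟩ | ⟨j, s, rfl, rfl⟩ | ⟨l, rfl, rfl⟩
        · cases s
          · simp only [Bool.not_false]
            rw [hee i, hfc, hfc, hfc, mPerm_z, hsgz, one_smul, mPerm_k, mPerm_k,
              hsgk, hsgk]
            cases hεi : ε i
            · simp [hee (σ i), map_smul, LinearMap.map_smul₂, LinearMap.smul_apply]
            · simp [heem (σ i), map_smul, LinearMap.map_smul₂, LinearMap.smul_apply]
          · simp only [Bool.not_true]
            rw [heem i, map_neg, hfc, hfc, hfc, mPerm_z, hsgz, one_smul, mPerm_k, mPerm_k,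
              hsgk, hsgk]
            cases hεi : ε i
            · simp [heem (σ i), map_smul, LinearMap.map_smul₂, LinearMap.smul_apply]
            · simp [hee (σ i), map_smul, LinearMap.map_smul₂, LinearMap.smul_apply]
        · rw [huv j s, hfc, hfc, hfc, mPerm_z, hsgz, one_smul, mPerm_r, mPerm_r,
            hsgr, hsgr, one_smul, one_smul]
          have hx : xor (!s) (δ j) = !(xor s (δ j)) := by cases s <;> cases (δ j) <;> rfl
          rw [hx, huv (τ j) (xor s (δ j))]
        · rw [hzz l, hfc, hfc, mPerm_z, hsgz, one_smul, mPerm_q, hsgr, one_smul, hzz (ρ l)]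
      · have hnot2 : ¬ SupPair (mPerm σ ε τ δ ρ p) (mPerm σ ε τ δ ρ p') :=
          fun hcon => hpp (mPerm_pair_iff.mp hcon)
        rw [h0 p p' hpp, map_zero, hfc, hfc]
        simp only [map_smul, LinearMap.map_smul₂, LinearMap.smul_apply]
        rw [h0 _ _ hnot2, smul_zero, smul_zero]
    have hbrall : ∀ x y, fE (br x y) = br (fE x) (fE y) := by
      have h1 : ∀ p' x, fE (br x (c p')) = br (fE x) (fE (c p')) := by
        intro p'
        have heq : ((fE : L ≃ₗ[F] L) : L →ₗ[F] L).comp (br.flip (c p'))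
            = (br.flip (fE (c p'))).comp ((fE : L ≃ₗ[F] L) : L →ₗ[F] L) := by
          refine Module.Basis.ext c fun p => ?_
          simp only [LinearMap.comp_apply, LinearMap.flip_apply, LinearEquiv.coe_coe]
          exact hbr_basis p p'
        intro x
        have h2 := LinearMap.congr_fun heq x
        simpa only [LinearMap.comp_apply, LinearMap.flip_apply, LinearEquiv.coe_coe] using h2
      intro x y
      have heq2 : ((fE : L ≃ₗ[F] L) : L →ₗ[F] L).comp (br x)
          = (br (fE x)).comp ((fE : L ≃ₗ[F] L) : L →ₗ[F] L) := by
        refine Module.Basis.ext c fun p' => ?_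
        simp only [LinearMap.comp_apply, LinearEquiv.coe_coe]
        exact h1 p' x
      have h3 := LinearMap.congr_fun heq2 y
      simpa only [LinearMap.comp_apply, LinearEquiv.coe_coe] using h3
    have hPm_even : ∀ x : (Fin k × Bool) ⊕ Unit,
        ∃ x', mPerm σ ε τ δ ρ (Sum.inl x) = Sum.inl x' := by
      rintro (⟨i, s⟩ | u)
      · exact ⟨Sum.inl (σ i, xor s (ε i)), rfl⟩
      · exact ⟨Sum.inr (), rfl⟩
    have hPm_even' : ∀ x : (Fin k × Bool) ⊕ Unit,
        ∃ x', (mPerm σ ε τ δ ρ).symm (Sum.inl x) = Sum.inl x' := by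
      rintro (⟨i, s⟩ | u)
      · exact ⟨Sum.inl (σ⁻¹ i, xor s (ε (σ⁻¹ i))), by rw [mPerm_symm]; rfl⟩
      · exact ⟨Sum.inr (), by rw [mPerm_symm]; rfl⟩
    have hPm_odd : ∀ x : (Fin r × Bool) ⊕ Fin q,
        ∃ x', mPerm σ ε τ δ ρ (Sum.inr x) = Sum.inr x' := by
      rintro (⟨j, s⟩ | l)
      · exact ⟨Sum.inl (τ j, xor s (δ j)), rfl⟩
      · exact ⟨Sum.inr (ρ l), rfl⟩
    have hPm_odd' : ∀ x : (Fin r × Bool) ⊕ Fin q,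
        ∃ x', (mPerm σ ε τ δ ρ).symm (Sum.inr x) = Sum.inr x' := by
      rintro (⟨j, s⟩ | l)
      · exact ⟨Sum.inl (τ⁻¹ j, xor s (δ (τ⁻¹ j))), by rw [mPerm_symm]; rfl⟩
      · exact ⟨Sum.inr (ρ⁻¹ l), by rw [mPerm_symm]; rfl⟩
    have hE0m : E0.map ((fE : L ≃ₗ[F] L) : L →ₗ[F] L) = E0 := by
      rw [hE0span, Submodule.map_span]
      apply le_antisymm
      · rw [Submodule.span_le]
        rintro x ⟨y, ⟨pe, rfl⟩, rfl⟩
        obtain ⟨x', hx'⟩ := hPm_even pe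
        rw [hfcl, hx']
        exact Submodule.smul_mem _ _ (Submodule.subset_span ⟨x', rfl⟩)
      · rw [Submodule.span_le]
        rintro x ⟨pe, rfl⟩
        obtain ⟨x', hx'⟩ := hPm_even' pe
        have hx'' : ((fE : L ≃ₗ[F] L) : L →ₗ[F] L) (c (Sum.inl x'))
            ∈ (((fE : L ≃ₗ[F] L) : L →ₗ[F] L) ''
              Set.range fun p : (Fin k × Bool) ⊕ Unit => c (Sum.inl p)) :=
          Set.mem_image_of_mem _ ⟨x', rfl⟩
        have h2 : sg (Sum.inl x') • (((fE : L ≃ₗ[F] L) : L →ₗ[F] L) (c (Sum.inl x')))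
            = c (Sum.inl pe) := by
          rw [hfcl, ← hx', smul_smul, Equiv.apply_symm_apply, hsg_sq, one_smul]
        show c _ ∈ _
        rw [← h2]
        exact Submodule.smul_mem _ _ (Submodule.subset_span hx'')
    have hE1m : E1.map ((fE : L ≃ₗ[F] L) : L →ₗ[F] L) = E1 := by
      rw [hE1span, Submodule.map_span]
      apply le_antisymm
      · rw [Submodule.span_le]
        rintro x ⟨y, ⟨pe, rfl⟩, rfl⟩
        obtain ⟨x', hx'⟩ := hPm_odd pe
        rw [hfcl, hx']
        exact Submodule.smul_mem _ _ (Submodule.subset_span ⟨x', rfl⟩)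
      · rw [Submodule.span_le]
        rintro x ⟨pe, rfl⟩
        obtain ⟨x', hx'⟩ := hPm_odd' pe
        have hx'' : ((fE : L ≃ₗ[F] L) : L →ₗ[F] L) (c (Sum.inr x'))
            ∈ (((fE : L ≃ₗ[F] L) : L →ₗ[F] L) ''
              Set.range fun p : (Fin r × Bool) ⊕ Fin q => c (Sum.inr p)) :=
          Set.mem_image_of_mem _ ⟨x', rfl⟩
        have h2 : sg (Sum.inr x') • (((fE : L ≃ₗ[F] L) : L →ₗ[F] L) (c (Sum.inr x')))
            = c (Sum.inr pe) := by
          rw [hfcl, ← hx', smul_smul, Equiv.apply_symm_apply, hsg_sq, one_smul]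
        show c _ ∈ _
        rw [← h2]
        exact Submodule.smul_mem _ _ (Submodule.subset_span hx'')
    have hCm : ∀ p, (C p).map ((fE : L ≃ₗ[F] L) : L →ₗ[F] L) = C (mPerm σ ε τ δ ρ p) := by
      intro p
      rw [hmapC, hfc, hC]
      exact Submodule.span_singleton_smul_eq (isUnit_iff_ne_zero.mpr (hsg_ne p)) _
    have hfmem : fE ∈ S := ⟨hbrall, hE0m, hE1m, fun p => ⟨mPerm σ ε τ δ ρ p, hCm p⟩⟩
    refine ⟨⟨fE, hfmem⟩, ?_⟩
    have hPA : ∀ p, P ⟨fE, hfmem⟩ p = mPerm σ ε τ δ ρ p := fun p => hPuniq _ p _ (hCm p)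
    have hKA : ∀ i, σK ⟨fE, hfmem⟩ i false = σ i ∧ εK ⟨fE, hfmem⟩ i false = ε i := by
      intro i
      have h1 := hK ⟨fE, hfmem⟩ i false
      rw [hPA, mPerm_k] at h1
      simp only [Sum.inl.injEq, Prod.mk.injEq, Bool.false_xor] at h1
      exact ⟨h1.1.symm, h1.2.symm⟩
    have hRA : ∀ j, τK ⟨fE, hfmem⟩ j false = τ j ∧ δK ⟨fE, hfmem⟩ j false = δ j := by
      intro j
      have h1 := hR ⟨fE, hfmem⟩ j false
      rw [hPA, mPerm_r] at h1
      simp only [Sum.inr.injEq, Sum.inl.injEq, Prod.mk.injEq, Bool.false_xor] at h1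
      exact ⟨h1.1.symm, h1.2.symm⟩
    have hQA : ∀ l, ρK ⟨fE, hfmem⟩ l = ρ l := by
      intro l
      have h1 := hQ ⟨fE, hfmem⟩ l
      rw [hPA, mPerm_q] at h1
      simp only [Sum.inr.injEq] at h1
      exact h1.symm
    have hσA : σE ⟨fE, hfmem⟩ = σ := Equiv.ext fun i => (hKA i).1
    have hτA : τE ⟨fE, hfmem⟩ = τ := Equiv.ext fun j => (hRA j).1
    have hρA : ρE ⟨fE, hfmem⟩ = ρ := Equiv.ext fun l => hQA l
    refine SemidirectProduct.ext ?_ ?_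
    · show mf ⟨fE, hfmem⟩ = n
      funext a
      rcases a with i | j
      · show b2z (εK ⟨fE, hfmem⟩ ((σE ⟨fE, hfmem⟩).symm i) false) = n (Sum.inl i)
        rw [hσA, (hKA _).2]
        show b2z (z2b (n (Sum.inl (σ (σ.symm i))))) = n (Sum.inl i)
        rw [Equiv.apply_symm_apply, b2z_z2b]
      · show b2z (δK ⟨fE, hfmem⟩ ((τE ⟨fE, hfmem⟩).symm j) false) = n (Sum.inr j)
        rw [hτA, (hRA _).2]
        show b2z (z2b (n (Sum.inr (τ (τ.symm j))))) = n (Sum.inr j)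
        rw [Equiv.apply_symm_apply, b2z_z2b]
    · show (σE ⟨fE, hfmem⟩, τE ⟨fE, hfmem⟩, ρE ⟨fE, hfmem⟩) = (σ, τ, ρ)
      rw [hσA, hτA, hρA]
  · -- kernel characterization
    intro f
    constructor
    · intro h
      have hl : mf f = 1 := congrArg SemidirectProduct.left h
      have hr₀ : (σE f, τE f, ρE f)
          = (1 : Equiv.Perm (Fin k) × Equiv.Perm (Fin r) × Equiv.Perm (Fin q)) :=
        congrArg SemidirectProduct.right h
      have hσ1 : σE f = 1 := congrArg Prod.fst hr₀
      have hτ1 : τE f = 1 := congrArg (fun x => x.2.1) hr₀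
      have hρ1 : ρE f = 1 := congrArg (fun x => x.2.2) hr₀
      have hεf : ∀ i, εK f i false = false := by
        intro i
        have h2 : mf f (Sum.inl (σE f i)) = 1 := by rw [hl]; rfl
        rw [show mf f (Sum.inl (σE f i)) = b2z (εK f ((σE f).symm (σE f i)) false) from rfl,
          Equiv.symm_apply_apply] at h2
        exact (b2z_eq_one_iff _).mp h2
      have hδf : ∀ j, δK f j false = false := by
        intro j
        have h2 : mf f (Sum.inr (τE f j)) = 1 := by rw [hl]; rfl
        rw [show mf f (Sum.inr (τE f j)) = b2z (δK f ((τE f).symm (τE f j)) false) from rfl,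
          Equiv.symm_apply_apply] at h2
        exact (b2z_eq_one_iff _).mp h2
      have hPid : ∀ p, P f p = p := by
        intro p
        rcases p with ((⟨i, s⟩ | u) | (⟨j, s⟩ | l))
        · rw [hKfull f i s, hεf i]
          have h2 : σK f i false = i := Equiv.ext_iff.mp hσ1 i
          rw [h2]
          simp
        · exact hPz f
        · rw [hRfull f j s, hδf j]
          have h2 : τK f j false = j := Equiv.ext_iff.mp hτ1 j
          rw [h2]
          simp
        · rw [hQ f l]
          have h2 : ρK f l = l := Equiv.ext_iff.mp hρ1 l
          rw [h2]
      intro p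
      rw [hPdef f p, hPid p]
    · intro h
      have hPid : ∀ p, P f p = p := fun p => hPuniq f p p (h p)
      have hσ1 : ∀ i, σK f i false = i ∧ εK f i false = false := by
        intro i
        have h1 := hKfull f i false
        rw [hPid] at h1
        simp only [Sum.inl.injEq, Prod.mk.injEq, Bool.false_xor] at h1
        exact ⟨h1.1.symm, h1.2.symm⟩
      have hτ1 : ∀ j, τK f j false = j ∧ δK f j false = false := by
        intro j
        have h1 := hRfull f j false
        rw [hPid] at h1
        simp only [Sum.inr.injEq, Sum.inl.injEq, Prod.mk.injEq, Bool.false_xor] at h1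
        exact ⟨h1.1.symm, h1.2.symm⟩
      have hρ1 : ∀ l, ρK f l = l := by
        intro l
        have h1 := hQ f l
        rw [hPid] at h1
        simp only [Sum.inr.injEq] at h1
        exact h1.symm
      refine SemidirectProduct.ext ?_ ?_
      · show mf f = 1
        funext a
        rcases a with i | j
        · show b2z (εK f ((σE f).symm i) false) = 1
          rw [(hσ1 _).2]
          rfl
        · show b2z (δK f ((τE f).symm j) false) = 1
          rw [(hτ1 _).2]
          rfl
      · show (σE f, τE f, ρE f) = 1
        have e1 : σE f = 1 := Equiv.ext fun i => (hσ1 i).1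
        have e2 : τE f = 1 := Equiv.ext fun j => (hτ1 j).1
        have e3 : ρE f = 1 := Equiv.ext fun l => hρ1 l
        rw [e1, e2, e3]
        rfl
end

section
/- Let L be a Heisenberg Lie color algebra of type (G, g_0, ε). Then L is (the grading of) a Heisenberg Lie superalgebra if and only if ε(g, -g+g_0) ∈ {1,-1} for every g ∈ G with L_g ≠ 0. -/
/-- Lemma 5.6: a Heisenberg Lie color algebra of type `(G, g₀, ε)` is (the
grading of) a Heisenberg Lie superalgebra if and only if
`ε(g, -g+g₀) ∈ {1,-1}` for every `g ∈ G` with `L_g ≠ 0`.  Being a graded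
Heisenberg superalgebra is expressed by the existence of a parity assignment
`δ : G → ℤ/2` on the components such that the bracket is super skew-symmetric
and satisfies the super Jacobi identity for this parity, the even part
brackets trivially with the odd part, and the center is even. -/
theorem heisenberg_color_is_super_iff
    (F : Type*) [Field F] [IsAlgClosed F] (hchar : (2 : F) ≠ 0)
    (L : Type*) [AddCommGroup L] [Module F L]
    (G : Type*) [AddCommGroup G] [DecidableEq G]
    (ε : G → G → Fˣ)
    (hεskew : ∀ g h : G, ε g h = (ε h g)⁻¹)
    (hεmul : ∀ g h k : G, ε g (h + k) = ε g h * ε g k)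
    (Lg : G → Submodule F L) (hint : DirectSum.IsInternal Lg)
    (br : L →ₗ[F] L →ₗ[F] L)
    (hgr : ∀ (g h : G) (x y : L), x ∈ Lg g → y ∈ Lg h → br x y ∈ Lg (g + h))
    (hskew : ∀ (g h : G) (x y : L), x ∈ Lg g → y ∈ Lg h →
      br x y = -((ε g h : F) • br y x))
    (hjac : ∀ (g h j : G) (x y t : L), x ∈ Lg g → y ∈ Lg h → t ∈ Lg j →
      br x (br y t) = br (br x y) t + (ε g h : F) • br y (br x t))
    -- Heisenberg: the center is one-dimensional, spanned by `z ∈ L_{g₀}`,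
    -- and coincides with the derived subalgebra
    (g₀ : G) (z : L) (hz0 : z ≠ 0) (hzg : z ∈ Lg g₀)
    (hcen : ∀ x : L, (∀ y : L, br x y = 0) ↔ x ∈ (F ∙ z))
    (hder : Submodule.span F {w : L | ∃ x y : L, br x y = w} = (F ∙ z))
    (hεdiag : ∀ g : G, 2 • g = g₀ → Lg g ≠ ⊥ → (ε g g : F) = -1) :
    (∃ δ : G → ZMod 2,
      δ g₀ = 0 ∧
      -- super skew-symmetry
      (∀ (g h : G) (x y : L), x ∈ Lg g → y ∈ Lg h →
        br x y = (if δ g = 1 ∧ δ h = 1 then (1 : F) else -1) • br y x) ∧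
      -- super Jacobi identity
      (∀ (g h j : G) (x y t : L), x ∈ Lg g → y ∈ Lg h → t ∈ Lg j →
        br x (br y t) = br (br x y) t +
          (if δ g = 1 ∧ δ h = 1 then (-1 : F) else 1) • br y (br x t)) ∧
      -- the even part brackets trivially with the odd part
      (∀ (g h : G) (x y : L), δ g = 0 → δ h = 1 → x ∈ Lg g → y ∈ Lg h →
        br x y = 0)) ↔
    (∀ g : G, Lg g ≠ ⊥ → ((ε g (-g + g₀) : F) = 1 ∨ (ε g (-g + g₀) : F) = -1)) := by
  classical
  -- basic consequences
  have h1F : (1 : F) ≠ -1 := fun h => hchar (by linear_combination h)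
  have hε0 : ∀ g : G, (ε g 0 : F) = 1 := by
    intro g
    have h := hεmul g 0 0
    rw [add_zero] at h
    have h2 : ε g 0 = 1 := by
      have := mul_left_cancel (a := ε g 0) (b := (1 : Fˣ)) (c := ε g 0)
        (by rw [mul_one, ← h])
      exact this.symm
    rw [h2]; rfl
  have hzcen : ∀ y : L, br z y = 0 :=
    (hcen z).mpr (Submodule.mem_span_singleton_self z)
  have hbrz : ∀ (h : G) (y : L), y ∈ Lg h → br y z = 0 := by
    intro h y hy
    rw [hskew h g₀ y z hy hzg, hzcen, smul_zero, neg_zero]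
  have hspan : ∀ x y : L, br x y ∈ (F ∙ z) := by
    intro x y; rw [← hder]; exact Submodule.subset_span ⟨x, y, rfl⟩
  have hsame : ∀ (a b : G) (x : L), x ≠ 0 → x ∈ Lg a → x ∈ Lg b → a = b := by
    intro a b x hx ha hb
    by_contra hne
    have hd := hint.submodule_iSupIndep a
    have hb' : x ∈ ⨆ j, ⨆ _ : j ≠ a, Lg j :=
      Submodule.mem_iSup_of_mem b (Submodule.mem_iSup_of_mem (Ne.symm hne) hb)
    exact hx (Submodule.disjoint_def.mp hd x ha hb')
  have hmid : ∀ (h : G) (x y t : L), y ∈ Lg h → br y (br x t) = 0 := by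
    intro h x y t hy
    obtain ⟨c, hc⟩ := Submodule.mem_span_singleton.mp (hspan x t)
    rw [← hc, map_smul, hbrz h y hy, smul_zero]
  have hkey : ∀ (g h : G) (x y : L), x ∈ Lg g → y ∈ Lg h → br x y ≠ 0 →
      h = -g + g₀ := by
    intro g h x y hx hy hne
    have h1 : br x y ∈ Lg (g + h) := hgr g h x y hx hy
    have h2 : br x y ∈ Lg g₀ := by
      obtain ⟨c, hc⟩ := Submodule.mem_span_singleton.mp (hspan x y)
      rw [← hc]; exact Submodule.smul_mem _ c hzg
    have h3 : g + h = g₀ := hsame _ _ _ hne h1 h2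
    rw [← h3, neg_add_cancel_left]
  constructor
  · rintro ⟨δ, -, hss, -, -⟩ g hLg
    obtain ⟨x, hxg, hx0⟩ := (Submodule.ne_bot_iff _).mp hLg
    by_cases hc : ∀ y, br x y = 0
    · -- x is central, so g = g₀ and ε g 0 = 1
      obtain ⟨c, hc2⟩ := Submodule.mem_span_singleton.mp ((hcen x).mp hc)
      have hc0 : c ≠ 0 := by
        rintro rfl; rw [zero_smul] at hc2; exact hx0 hc2.symm
      have hzgg : z ∈ Lg g := by
        have hmem : c⁻¹ • x ∈ Lg g := Submodule.smul_mem _ _ hxg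
        rwa [← hc2, smul_smul, inv_mul_cancel₀ hc0, one_smul] at hmem
      have hgg : g₀ = g := hsame _ _ z hz0 hzg hzgg
      have h0 : -g + g₀ = 0 := by rw [← hgg, neg_add_cancel]
      left; rw [h0, hε0]
    · push_neg at hc
      obtain ⟨y, hy⟩ := hc
      have hex : ∃ (h : G) (y' : L), y' ∈ Lg h ∧ br x y' ≠ 0 := by
        by_contra hno
        push_neg at hno
        have hker : LinearMap.ker (br x) = ⊤ := by
          rw [eq_top_iff, ← hint.submodule_iSup_eq_top]
          exact iSup_le fun h y' hy' => LinearMap.mem_ker.mpr (hno h y' hy')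
        exact hy (LinearMap.mem_ker.mp (hker ▸ Submodule.mem_top (x := y)))
      obtain ⟨h, y', hy'g, hy'⟩ := hex
      have hh : h = -g + g₀ := hkey g h x y' hxg hy'g hy'
      subst hh
      have e1 := hskew g (-g + g₀) x y' hxg hy'g
      have e2 := hss g (-g + g₀) x y' hxg hy'g
      have hyx : br y' x ≠ 0 := by
        intro h0; rw [h0, smul_zero, neg_zero] at e1; exact hy' e1
      have e3 : ((if δ g = 1 ∧ δ (-g + g₀) = 1 then (1 : F) else -1) +
          (ε g (-g + g₀) : F)) • br y' x = 0 := by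
        rw [add_smul, ← e2, e1, neg_add_cancel]
      have e4 : (if δ g = 1 ∧ δ (-g + g₀) = 1 then (1 : F) else -1) +
          (ε g (-g + g₀) : F) = 0 := (smul_eq_zero.mp e3).resolve_right hyx
      by_cases hcase : δ g = 1 ∧ δ (-g + g₀) = 1
      · rw [if_pos hcase] at e4; right; linear_combination e4
      · rw [if_neg hcase] at e4; left; linear_combination e4
  · intro hε
    refine ⟨fun g => if (ε g (-g + g₀) : F) = -1 then 1 else 0, ?_, ?_, ?_, ?_⟩
    · simp only [neg_add_cancel, hε0, if_neg h1F]
    · intro g h x y hx hy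
      by_cases hb : br y x = 0
      · have hb' : br x y = 0 := by
          rw [hskew g h x y hx hy, hb, smul_zero, neg_zero]
        rw [hb, hb', smul_zero]
      · have hg : g = -h + g₀ := hkey h g y x hy hx hb
        have hh : h = -g + g₀ := by rw [hg]; abel
        have hx0 : x ≠ 0 := fun h0 => hb (by rw [h0]; simp)
        have hy0 : y ≠ 0 := fun h0 => hb (by rw [h0]; simp)
        have hLgne : Lg g ≠ ⊥ := (Submodule.ne_bot_iff _).mpr ⟨x, hx, hx0⟩
        have hεgh : (ε g h : F) = 1 ∨ (ε g h : F) = -1 := by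
          rcases hε g hLgne with h1 | h1
          · left; rw [hh]; exact h1
          · right; rw [hh]; exact h1
        rcases hεgh with he | he
        · have c1 : ¬((ε g (-g + g₀) : F) = -1) := by
            rw [← hh, he]; exact h1F
          simp only [if_neg c1]
          rw [if_neg (by rintro ⟨h01, -⟩; exact absurd h01 (by decide))]
          rw [hskew g h x y hx hy, he, one_smul, neg_smul, one_smul]
        · have c1 : (ε g (-g + g₀) : F) = -1 := by rw [← hh]; exact he
          have c2 : (ε h (-h + g₀) : F) = -1 := by
            rw [← hg, hεskew h g, Units.val_inv_eq_inv_val, he]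
            norm_num
          have hcond : (if (ε g (-g + g₀) : F) = -1 then (1 : ZMod 2) else 0) = 1 ∧
              (if (ε h (-h + g₀) : F) = -1 then (1 : ZMod 2) else 0) = 1 :=
            ⟨if_pos c1, if_pos c2⟩
          simp only [if_pos hcond]
          rw [hskew g h x y hx hy, he, one_smul]
          module
    · intro g h j x y t hx hy ht
      have h0 : br y (br x t) = 0 := hmid h x y t hy
      rw [hjac g h j x y t hx hy ht, h0, smul_zero, smul_zero]
    · intro g h x y hδg hδh hx hy
      by_contra hb
      have hh : h = -g + g₀ := hkey g h x y hx hy hb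
      have hg : g = -h + g₀ := by rw [hh]; abel
      have hx0 : x ≠ 0 := fun h0 => hb (by rw [h0]; simp)
      have hLgne : Lg g ≠ ⊥ := (Submodule.ne_bot_iff _).mpr ⟨x, hx, hx0⟩
      simp only at hδg hδh
      have c2 : (ε h (-h + g₀) : F) = -1 := by
        by_contra hcc
        rw [if_neg hcc] at hδh
        exact absurd hδh (by decide)
      have c1 : (ε g (-g + g₀) : F) ≠ -1 := by
        intro hcc
        rw [if_pos hcc] at hδg
        exact absurd hδg (by decide)
      have he : (ε g h : F) = 1 := by
        rcases hε g hLgne with h1 | h1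
        · rw [hh]; exact h1
        · exact absurd h1 c1
      have hthis : (ε h g : F) = -1 := by rw [hg]; exact c2
      rw [hεskew h g, Units.val_inv_eq_inv_val, he, inv_one] at hthis
      exact h1F hthis
end

section
/- Let H_n^λ (λ ∈ (F^×)^k, n = 2k+2, F algebraically closed of characteristic 0) be the twisted Heisenberg algebra with basis {z,u,e_1,ê_1,…,e_k,ê_k} and nonzero brackets [e_i,ê_i] = λ_i z, [u,e_i] = λ_i ê_i, [u,ê_i] = λ_i e_i. Then the group T of automorphisms diagonal with respect to the basis {u, z, u_i = e_i + ê_i, v_i = e_i − ê_i} is a maximal torus of Aut(H_n^λ), consisting exactly of the maps u ↦ u, z ↦ γz, u_i ↦ α_i u_i, v_i ↦ (γ/α_i) v_i for γ, α_i ∈ F^×. -/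
abbrev TwIdx (k : ℕ) := Unit ⊕ Unit ⊕ (Fin k × Bool)

def TwPair {k : ℕ} (p q : TwIdx k) : Prop :=
  ∃ i : Fin k, ∃ s : Bool,
    (p = Sum.inr (Sum.inr (i, s)) ∧ q = Sum.inr (Sum.inr (i, !s))) ∨
    (p = Sum.inr (Sum.inl ()) ∧ q = Sum.inr (Sum.inr (i, s))) ∨
    (p = Sum.inr (Sum.inr (i, s)) ∧ q = Sum.inr (Sum.inl ()))

/-- The explicit diagonal automorphisms of `H_n^λ` in the basis
`{u, z, u_i, v_i}`: `u ↦ u`, `z ↦ γ z`, `u_i ↦ α_i u_i`, `v_i ↦ (γ/α_i) v_i`. -/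
def IsDiagTwAut {F : Type*} [Field F] {L : Type*} [LieRing L] [LieAlgebra F L]
    {k : ℕ} (c : Module.Basis (TwIdx k) F L) (f : L ≃ₗ[F] L) : Prop :=
  ∃ (γ : F) (α : Fin k → F), γ ≠ 0 ∧ (∀ i, α i ≠ 0) ∧
    f (c (Sum.inr (Sum.inl ()))) = c (Sum.inr (Sum.inl ())) ∧
    f (c (Sum.inl ())) = γ • c (Sum.inl ()) ∧
    (∀ i : Fin k, f (c (Sum.inr (Sum.inr (i, false)))) = α i • c (Sum.inr (Sum.inr (i, false)))) ∧
    (∀ i : Fin k, f (c (Sum.inr (Sum.inr (i, true)))) = (γ / α i) • c (Sum.inr (Sum.inr (i, true))))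

section Aux

variable {F : Type*} [Field F] {L : Type*} [LieRing L] [LieAlgebra F L] {k : ℕ}

/-- A linear map that respects brackets on basis elements respects all brackets. -/
lemma twAux_bracket_ext (c : Module.Basis (TwIdx k) F L) (f : L →ₗ[F] L)
    (h : ∀ p q, f ⁅c p, c q⁆ = ⁅f (c p), f (c q)⁆) (x y : L) :
    f ⁅x, y⁆ = ⁅f x, f y⁆ := by
  let B1 : L →ₗ[F] L →ₗ[F] L :=
    LinearMap.mk₂ F (fun x y => f ⁅x, y⁆)
      (fun m n o => by simp [add_lie]) (fun a m n => by simp [smul_lie])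
      (fun m n o => by simp [lie_add]) (fun a m n => by simp [lie_smul])
  let B2 : L →ₗ[F] L →ₗ[F] L :=
    LinearMap.mk₂ F (fun x y => ⁅f x, f y⁆)
      (fun m n o => by simp [add_lie]) (fun a m n => by simp [smul_lie])
      (fun m n o => by simp [lie_add]) (fun a m n => by simp [lie_smul])
  have hB : B1 = B2 := c.ext fun p => c.ext fun q => by simpa [B1, B2] using h p q
  simpa [B1, B2] using LinearMap.congr_fun (LinearMap.congr_fun hB x) y

/-- Coordinates of the image under a diagonal map. -/
lemma twAux_coord (c : Module.Basis (TwIdx k) F L) (A : TwIdx k → F) (g : L →ₗ[F] L)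
    (hg : ∀ p, g (c p) = A p • c p) (w : L) (q : TwIdx k) :
    c.repr (g w) q = A q * c.repr w q := by
  have h : (Finsupp.lapply q ∘ₗ (↑c.repr : L →ₗ[F] (TwIdx k →₀ F)) ∘ₗ g)
      = A q • (Finsupp.lapply q ∘ₗ (↑c.repr : L →ₗ[F] (TwIdx k →₀ F))) :=
    c.ext fun p => by
      by_cases hpq : p = q
      · subst hpq; simp [hg p]
      · simp [hg p, Module.Basis.repr_self, Finsupp.single_apply, hpq]
  simpa using LinearMap.congr_fun h w

end Aux

/-- Proposition 6.1(a): in the twisted Heisenberg algebra `H_n^λ` with basis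
`{u, z, u_i = e_i+ê_i, v_i = e_i-ê_i}` (brackets `[u,u_i] = λ_i u_i`,
`[u,v_i] = -λ_i v_i`, `[u_i,v_i] = -2λ_i z`), the group of automorphisms
diagonal with respect to this basis is a maximal torus of `Aut(H_n^λ)`, and it
consists exactly of the maps `u ↦ u`, `z ↦ γz`, `u_i ↦ α_i u_i`,
`v_i ↦ (γ/α_i) v_i`. -/
theorem twisted_heisenberg_maximal_torus
    (F : Type*) [Field F] [IsAlgClosed F] [CharZero F]
    (L : Type*) [LieRing L] [LieAlgebra F L] (k : ℕ) (hk : 0 < k)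
    (lam : Fin k → F) (hlam : ∀ i, lam i ≠ 0)
    (c : Module.Basis (TwIdx k) F L)
    (huu : ∀ i : Fin k, ⁅c (Sum.inr (Sum.inl ())), c (Sum.inr (Sum.inr (i, false)))⁆
      = lam i • c (Sum.inr (Sum.inr (i, false))))
    (huv : ∀ i : Fin k, ⁅c (Sum.inr (Sum.inl ())), c (Sum.inr (Sum.inr (i, true)))⁆
      = -(lam i) • c (Sum.inr (Sum.inr (i, true))))
    (huvz : ∀ i : Fin k, ⁅c (Sum.inr (Sum.inr (i, false))), c (Sum.inr (Sum.inr (i, true)))⁆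
      = (-(2 : F) * lam i) • c (Sum.inl ()))
    (h0 : ∀ p q : TwIdx k, ¬ TwPair p q → ⁅c p, c q⁆ = 0) :
    ∃ T : Subgroup (L ≃ₗ[F] L),
      -- T is the group of automorphisms diagonal w.r.t. the basis
      (↑T = {f : L ≃ₗ[F] L | (∀ x y : L, f ⁅x, y⁆ = ⁅f x, f y⁆) ∧
          ∀ p : TwIdx k, ∃ cst : F, f (c p) = cst • c p}) ∧
      -- T consists exactly of the stated diagonal maps
      (↑T = {f : L ≃ₗ[F] L | (∀ x y : L, f ⁅x, y⁆ = ⁅f x, f y⁆) ∧ IsDiagTwAut c f}) ∧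
      -- T is abelian
      (∀ f ∈ T, ∀ g ∈ T, f * g = g * f) ∧
      -- maximality: any automorphism commuting with all of T lies in T
      (∀ f : L ≃ₗ[F] L, (∀ x y : L, f ⁅x, y⁆ = ⁅f x, f y⁆) →
        (∀ g ∈ T, f * g = g * f) → f ∈ T) := by
  classical
  -- basic facts
  have smulinj : ∀ (p : TwIdx k) {a b : F}, a • c p = b • c p → a = b := by
    intro p a b h
    have h2 : (a - b) • c p = 0 := by rw [sub_smul, h, sub_self]
    rcases smul_eq_zero.mp h2 with h3 | h3
    · exact sub_eq_zero.mp h3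
    · exact absurd h3 (c.ne_zero p)
  have cstne : ∀ (f : L ≃ₗ[F] L) (p : TwIdx k) (a : F), f (c p) = a • c p → a ≠ 0 := by
    intro f p a h ha
    rw [ha, zero_smul] at h
    exact c.ne_zero p (f.injective (h.trans f.map_zero.symm))
  -- bracket preservation from diagonal data
  have brOf : ∀ (f : L ≃ₗ[F] L) (A : TwIdx k → F),
      (∀ p, f (c p) = A p • c p) → A (Sum.inr (Sum.inl ())) = 1 →
      (∀ i : Fin k,
        A (Sum.inr (Sum.inr (i, false))) * A (Sum.inr (Sum.inr (i, true))) = A (Sum.inl ())) →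
      ∀ x y : L, f ⁅x, y⁆ = ⁅f x, f y⁆ := by
    intro f A hA hu hmul
    have hRHS : ∀ p q, ⁅f (c p), f (c q)⁆ = (A p * A q) • ⁅c p, c q⁆ := fun p q => by
      rw [hA, hA, smul_lie, lie_smul, smul_smul]
    have base : ∀ p q, f ⁅c p, c q⁆ = (A p * A q) • ⁅c p, c q⁆ →
        f ⁅c q, c p⁆ = (A q * A p) • ⁅c q, c p⁆ := by
      intro p q h
      rw [← lie_skew (c q) (c p), map_neg, h, mul_comm (A q) (A p), smul_neg]
    have main : ∀ p q, f ⁅c p, c q⁆ = (A p * A q) • ⁅c p, c q⁆ := by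
      have c1 : ∀ i : Fin k, f ⁅c (Sum.inr (Sum.inl ())), c (Sum.inr (Sum.inr (i, false)))⁆
          = (A (Sum.inr (Sum.inl ())) * A (Sum.inr (Sum.inr (i, false)))) •
            ⁅c (Sum.inr (Sum.inl ())), c (Sum.inr (Sum.inr (i, false)))⁆ := by
        intro i
        rw [huu i, map_smul, hA, hu]
        module
      have c2 : ∀ i : Fin k, f ⁅c (Sum.inr (Sum.inl ())), c (Sum.inr (Sum.inr (i, true)))⁆
          = (A (Sum.inr (Sum.inl ())) * A (Sum.inr (Sum.inr (i, true)))) •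
            ⁅c (Sum.inr (Sum.inl ())), c (Sum.inr (Sum.inr (i, true)))⁆ := by
        intro i
        rw [huv i, map_smul, hA, hu]
        module
      have c3 : ∀ i : Fin k,
          f ⁅c (Sum.inr (Sum.inr (i, false))), c (Sum.inr (Sum.inr (i, true)))⁆
          = (A (Sum.inr (Sum.inr (i, false))) * A (Sum.inr (Sum.inr (i, true)))) •
            ⁅c (Sum.inr (Sum.inr (i, false))), c (Sum.inr (Sum.inr (i, true)))⁆ := by
        intro i
        rw [huvz i, map_smul, hA, hmul i]
        module
      intro p q
      by_cases hpq : TwPair p q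
      · obtain ⟨i, s, H⟩ := hpq
        rcases H with ⟨hp, hq⟩ | ⟨hp, hq⟩ | ⟨hp, hq⟩ <;> subst hp <;> subst hq <;> cases s <;>
          (try simp only [Bool.not_false, Bool.not_true])
        · exact c3 i
        · exact base _ _ (c3 i)
        · exact c1 i
        · exact c2 i
        · exact base _ _ (c1 i)
        · exact base _ _ (c2 i)
      · rw [h0 p q hpq]
        simp
    have key : ∀ p q, f.toLinearMap ⁅c p, c q⁆ = ⁅f.toLinearMap (c p), f.toLinearMap (c q)⁆ :=
      fun p q => by
        show f ⁅c p, c q⁆ = ⁅f (c p), f (c q)⁆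
        rw [main p q, hRHS p q]
    exact fun x y => twAux_bracket_ext c f.toLinearMap key x y
  -- the subgroup
  refine ⟨⟨⟨⟨{f : L ≃ₗ[F] L | (∀ x y : L, f ⁅x, y⁆ = ⁅f x, f y⁆) ∧
      ∀ p : TwIdx k, ∃ cst : F, f (c p) = cst • c p}, ?_⟩, ?_⟩, ?_⟩, rfl, ?_, ?_, ?_⟩
  · -- mul_mem
    rintro a b ⟨hab, had⟩ ⟨hbb, hbd⟩
    refine ⟨fun x y => ?_, fun p => ?_⟩
    · show a (b ⁅x, y⁆) = ⁅a (b x), a (b y)⁆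
      rw [hbb, hab]
    · obtain ⟨s, hs⟩ := hbd p
      obtain ⟨t, ht⟩ := had p
      exact ⟨t * s, by show a (b (c p)) = _; rw [hs, map_smul, ht, smul_smul, mul_comm]⟩
  · -- one_mem
    exact ⟨fun x y => rfl, fun p => ⟨1, (one_smul F _).symm⟩⟩
  · -- inv_mem
    rintro x ⟨hxb, hxd⟩
    refine ⟨fun a b => x.injective ?_, fun p => ?_⟩
    · show x (x.symm ⁅a, b⁆) = x ⁅x.symm a, x.symm b⁆
      rw [x.apply_symm_apply, hxb, x.apply_symm_apply, x.apply_symm_apply]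
    · obtain ⟨s, hs⟩ := hxd p
      have hs0 : s ≠ 0 := cstne x p s hs
      refine ⟨s⁻¹, x.injective ?_⟩
      show x (x.symm (c p)) = x (s⁻¹ • c p)
      rw [x.apply_symm_apply, map_smul, hs, smul_smul, inv_mul_cancel₀ hs0, one_smul]
  · -- second description
    ext f
    simp only [Set.mem_setOf_eq]
    constructor
    · rintro ⟨hbr, hdiag⟩
      refine ⟨hbr, ?_⟩
      obtain ⟨μ, hμ⟩ := hdiag (Sum.inr (Sum.inl ()))
      obtain ⟨γ, hγ⟩ := hdiag (Sum.inl ())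
      choose α hα using fun i => hdiag (Sum.inr (Sum.inr (i, false)))
      choose β hβ using fun i => hdiag (Sum.inr (Sum.inr (i, true)))
      have hγ0 : γ ≠ 0 := cstne f _ _ hγ
      have hα0 : ∀ i, α i ≠ 0 := fun i => cstne f _ _ (hα i)
      have hμ1 : μ = 1 := by
        set i : Fin k := ⟨0, hk⟩
        have h1 := hbr (c (Sum.inr (Sum.inl ()))) (c (Sum.inr (Sum.inr (i, false))))
        rw [huu i, map_smul, hα i, hμ, smul_lie, lie_smul, huu i,
          smul_smul, smul_smul, smul_smul] at h1
        have h2 := smulinj _ h1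
        have h3 : μ * (α i * lam i) = 1 * (α i * lam i) := by linear_combination -h2
        exact mul_right_cancel₀ (mul_ne_zero (hα0 i) (hlam i)) h3
      have hβγ : ∀ i, β i = γ / α i := by
        intro i
        have h1 := hbr (c (Sum.inr (Sum.inr (i, false)))) (c (Sum.inr (Sum.inr (i, true))))
        rw [huvz i, map_smul, hγ, hα i, hβ i, smul_lie, lie_smul, huvz i,
          smul_smul, smul_smul, smul_smul] at h1
        have h2 := smulinj _ h1
        rw [eq_div_iff (hα0 i)]
        have h3 : (β i * α i) * (-(2 : F) * lam i) = γ * (-(2 : F) * lam i) := by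
          linear_combination -h2
        exact mul_right_cancel₀ (mul_ne_zero (by norm_num) (hlam i)) h3
      exact ⟨γ, α, hγ0, hα0, by rw [hμ, hμ1, one_smul], hγ, hα,
        fun i => by rw [hβ i, hβγ i]⟩
    · rintro ⟨hbr, γ, α, hγ0, hα0, hu, hz, hαf, hβf⟩
      refine ⟨hbr, fun p => ?_⟩
      rcases p with ⟨⟩ | ⟨⟩ | ⟨i, b⟩
      · exact ⟨γ, hz⟩
      · exact ⟨1, by rw [hu, one_smul]⟩
      · cases b
        · exact ⟨α i, hαf i⟩
        · exact ⟨γ / α i, hβf i⟩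
  · -- abelian
    rintro f ⟨hfb, hfd⟩ g ⟨hgb, hgd⟩
    choose a ha using hfd
    choose b hb using hgd
    apply LinearEquiv.toLinearMap_injective
    apply c.ext
    intro p
    show f (g (c p)) = g (f (c p))
    calc f (g (c p)) = b p • a p • c p := by rw [hb p, map_smul, ha p]
      _ = a p • b p • c p := by rw [smul_smul, smul_smul, mul_comm]
      _ = g (f (c p)) := by rw [ha p, map_smul, hb p]
  · -- maximality
    intro f hbr hcomm
    -- construct a diagonal automorphism with pairwise distinct eigenvalues
    set e : TwIdx k → ℕ := fun p =>
      match p with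
      | Sum.inl _ => 2 * k + 3
      | Sum.inr (Sum.inl _) => 0
      | Sum.inr (Sum.inr (i, false)) => i.1 + 1
      | Sum.inr (Sum.inr (i, true)) => 2 * k + 2 - i.1
      with he
    have heinj : Function.Injective e := by
      rintro (⟨⟩ | ⟨⟩ | ⟨i, (_ | _)⟩) (⟨⟩ | ⟨⟩ | ⟨j, (_ | _)⟩) h <;>
        simp only [he] at h <;>
        first
          | rfl
          | (exfalso; omega)
          | (exfalso; have := i.2; omega)
          | (exfalso; have := j.2; omega)
          | (exfalso; have := i.2; have := j.2; omega)
          | (have hij : i = j := by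
              have := i.2; have := j.2; exact Fin.ext (by omega)
             rw [hij])
    set A : TwIdx k → F := fun p => (2 : F) ^ (e p) with hA
    have hAne : ∀ p, A p ≠ 0 := fun p => pow_ne_zero _ two_ne_zero
    have hAinj : Function.Injective A := by
      intro p q h
      apply heinj
      have h2 : ((2 ^ e p : ℕ) : F) = ((2 ^ e q : ℕ) : F) := by push_cast; exact h
      exact Nat.pow_right_injective (le_refl 2) (Nat.cast_injective h2)
    -- the diagonal linear equivalence with eigenvalues A
    set fwd : L →ₗ[F] L := c.constr F (fun p => A p • c p) with hfwd
    set bwd : L →ₗ[F] L := c.constr F (fun p => (A p)⁻¹ • c p) with hbwd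
    have h1 : fwd ∘ₗ bwd = LinearMap.id := c.ext fun p => by
      simp [hfwd, hbwd, Module.Basis.constr_basis, map_smul, smul_smul,
        inv_mul_cancel₀ (hAne p)]
    have h2 : bwd ∘ₗ fwd = LinearMap.id := c.ext fun p => by
      simp [hfwd, hbwd, Module.Basis.constr_basis, map_smul, smul_smul,
        mul_inv_cancel₀ (hAne p)]
    set g : L ≃ₗ[F] L := LinearEquiv.ofLinear fwd bwd h1 h2 with hgdef
    have hg : ∀ p, g (c p) = A p • c p := fun p => by
      simp [hgdef, hfwd, Module.Basis.constr_basis]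
    have hgT : (∀ x y : L, g ⁅x, y⁆ = ⁅g x, g y⁆) ∧
        ∀ p : TwIdx k, ∃ cst : F, g (c p) = cst • c p := by
      refine ⟨brOf g A hg ?_ ?_, fun p => ⟨A p, hg p⟩⟩
      · simp [hA, he]
      · intro i
        simp only [hA, he]
        rw [← pow_add]
        congr 1
        have := i.2
        omega
    have hcg := hcomm g hgT
    have hfg : ∀ x : L, f (g x) = g (f x) := fun x => DFunLike.congr_fun hcg x
    -- f preserves each eigenspace
    have key : ∀ p, f (c p) = (c.repr (f (c p)) p) • c p := by
      intro p
      have hgf : g (f (c p)) = A p • f (c p) := by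
        rw [← hfg, hg p, map_smul]
      have hzero : ∀ q, q ≠ p → c.repr (f (c p)) q = 0 := by
        intro q hq
        have hc := twAux_coord c A g.toLinearMap hg (f (c p)) q
        have hc2 : c.repr (g (f (c p))) q = A p * c.repr (f (c p)) q := by
          rw [hgf, map_smul, Finsupp.smul_apply, smul_eq_mul]
        have hc3 : A q * c.repr (f (c p)) q = A p * c.repr (f (c p)) q := by
          rw [← hc]; exact hc2
        by_contra hne
        exact hq (hAinj (mul_right_cancel₀ hne hc3))
      apply c.repr.injective
      rw [map_smul, Module.Basis.repr_self, Finsupp.smul_single, smul_eq_mul, mul_one]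
      ext q
      by_cases hqp : q = p
      · subst hqp; simp [Finsupp.single_apply]
      · simp [Finsupp.single_apply, Ne.symm hqp, hzero q hqp]
    exact ⟨hbr, fun p => ⟨_, key p⟩⟩
end

section
/- Let H_n^λ (n = 2k+2) be a twisted Heisenberg algebra over an algebraically closed field of characteristic zero, graded by an abelian group G, and let u' be a homogeneous element with u' ∉ [L,L] of degree h ∈ G. Then h has finite order in G. -/
set_option linter.unusedSectionVars false

open Module

namespace TwAux

abbrev zI (k : ℕ) : TwIdx k := Sum.inl ()
abbrev uI (k : ℕ) : TwIdx k := Sum.inr (Sum.inl ())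
abbrev eI {k : ℕ} (i : Fin k) (s : Bool) : TwIdx k := Sum.inr (Sum.inr (i, s))

variable {F : Type*} [Field F] {L : Type*} [LieRing L] [LieAlgebra F L] {k : ℕ}
  (lam : Fin k → F) (b : Module.Basis (TwIdx k) F L)

lemma ntp_z_left (q : TwIdx k) : ¬ TwPair (zI k) q := by
  rintro ⟨i, s, (⟨h1, h2⟩|⟨h1, h2⟩|⟨h1, h2⟩)⟩ <;> simp [zI] at h1

lemma ntp_z_right (p : TwIdx k) : ¬ TwPair p (zI k) := by
  rintro ⟨i, s, (⟨h1, h2⟩|⟨h1, h2⟩|⟨h1, h2⟩)⟩ <;> simp [zI] at h2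

lemma ntp_uu : ¬ TwPair (uI k) (uI k) := by
  rintro ⟨i, s, (⟨h1, h2⟩|⟨h1, h2⟩|⟨h1, h2⟩)⟩ <;> simp [uI] at h1 h2

lemma ntp_ee {i j : Fin k} {s t : Bool} (hne : ¬ (i = j ∧ t = !s)) :
    ¬ TwPair (eI i s) (eI j t) := by
  rintro ⟨i', s', (⟨h1, h2⟩|⟨h1, h2⟩|⟨h1, h2⟩)⟩ <;> simp [eI, uI] at h1 h2
  exact hne ⟨h1.1.trans h2.1.symm, by rw [h2.2, ← h1.2]⟩

variable
  (hee : ∀ i : Fin k, ⁅b (eI i false), b (eI i true)⁆ = lam i • b (zI k))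
  (hue : ∀ i : Fin k, ⁅b (uI k), b (eI i false)⁆ = lam i • b (eI i true))
  (huf : ∀ i : Fin k, ⁅b (uI k), b (eI i true)⁆ = lam i • b (eI i false))
  (h0 : ∀ p q : TwIdx k, ¬ TwPair p q → ⁅b p, b q⁆ = 0)

include hee hue huf h0

lemma br_ue (i : Fin k) (s : Bool) : ⁅b (uI k), b (eI i s)⁆ = lam i • b (eI i (!s)) := by
  cases s
  · exact hue i
  · exact huf i

lemma br_pair (i : Fin k) (s : Bool) :
    ⁅b (eI i s), b (eI i (!s))⁆ = (if s then -lam i else lam i) • b (zI k) := by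
  cases s
  · simpa using hee i
  · simp only [Bool.not_true, if_pos]
    rw [← lie_skew, hee i, neg_smul]

lemma adz : LieAlgebra.ad F L (b (zI k)) = 0 := by
  apply b.ext
  intro p
  simpa using h0 _ _ (ntp_z_left p)

lemma br_xz (x : L) : ⁅x, b (zI k)⁆ = 0 := by
  rw [← lie_skew, ← LieAlgebra.ad_apply (R := F), adz lam b hee hue huf h0]
  simp

lemma ade (i : Fin k) : LieAlgebra.ad F L (b (eI i false)) =
    (b.coord (uI k)).smulRight ((-lam i) • b (eI i true)) +
    (b.coord (eI i true)).smulRight (lam i • b (zI k)) := by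
  apply b.ext
  intro p
  rcases p with ⟨⟩ | ⟨⟩ | ⟨j, s⟩
  · -- p = z
    rw [LinearMap.add_apply, LinearMap.smulRight_apply, LinearMap.smulRight_apply,
      LieAlgebra.ad_apply, br_xz lam b hee hue huf h0]
    simp [Basis.coord_apply, Basis.repr_self, Finsupp.single_apply]
  · -- p = u
    rw [LinearMap.add_apply, LinearMap.smulRight_apply, LinearMap.smulRight_apply,
      LieAlgebra.ad_apply, ← lie_skew, br_ue lam b hee hue huf h0 i false]
    simp [Basis.coord_apply, Basis.repr_self, Finsupp.single_apply, smul_smul]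
  · -- p = e j s
    rw [LinearMap.add_apply, LinearMap.smulRight_apply, LinearMap.smulRight_apply,
      LieAlgebra.ad_apply]
    by_cases hji : j = i
    · subst hji
      cases s
      · rw [h0 _ _ (ntp_ee (by simp))]
        simp [Basis.coord_apply, Basis.repr_self, Finsupp.single_apply]
      · rw [hee j]
        simp [Basis.coord_apply, Basis.repr_self, Finsupp.single_apply]
    · rw [h0 _ _ (ntp_ee (by simp [hji]; tauto))]
      simp [Basis.coord_apply, Basis.repr_self, Finsupp.single_apply, hji]

lemma adf (i : Fin k) : LieAlgebra.ad F L (b (eI i true)) =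
    (b.coord (uI k)).smulRight ((-lam i) • b (eI i false)) +
    (b.coord (eI i false)).smulRight ((-lam i) • b (zI k)) := by
  apply b.ext
  intro p
  rcases p with ⟨⟩ | ⟨⟩ | ⟨j, s⟩
  · rw [LinearMap.add_apply, LinearMap.smulRight_apply, LinearMap.smulRight_apply,
      LieAlgebra.ad_apply, br_xz lam b hee hue huf h0]
    simp [Basis.coord_apply, Basis.repr_self, Finsupp.single_apply]
  · rw [LinearMap.add_apply, LinearMap.smulRight_apply, LinearMap.smulRight_apply,
      LieAlgebra.ad_apply, ← lie_skew, br_ue lam b hee hue huf h0 i true]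
    simp [Basis.coord_apply, Basis.repr_self, Finsupp.single_apply, smul_smul]
  · rw [LinearMap.add_apply, LinearMap.smulRight_apply, LinearMap.smulRight_apply,
      LieAlgebra.ad_apply]
    by_cases hji : j = i
    · subst hji
      cases s
      · rw [← lie_skew, hee j]
        simp [Basis.coord_apply, Basis.repr_self, Finsupp.single_apply]
      · rw [h0 _ _ (ntp_ee (by simp))]
        simp [Basis.coord_apply, Basis.repr_self, Finsupp.single_apply]
    · rw [h0 _ _ (ntp_ee (by simp [hji]; tauto))]
      simp [Basis.coord_apply, Basis.repr_self, Finsupp.single_apply, hji]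

lemma adu : LieAlgebra.ad F L (b (uI k)) =
    ∑ i : Fin k, ((b.coord (eI i false)).smulRight (lam i • b (eI i true)) +
      (b.coord (eI i true)).smulRight (lam i • b (eI i false))) := by
  apply b.ext
  intro p
  rw [LieAlgebra.ad_apply, LinearMap.sum_apply]
  rcases p with ⟨⟩ | ⟨⟩ | ⟨j, s⟩
  · rw [br_xz lam b hee hue huf h0]
    simp [Basis.coord_apply, Basis.repr_self, Finsupp.single_apply]
  · rw [h0 _ _ ntp_uu]
    simp [Basis.coord_apply, Basis.repr_self, Finsupp.single_apply]
  · rw [br_ue lam b hee hue huf h0 j s]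
    cases s <;>
      simp [Basis.coord_apply, Basis.repr_self, Finsupp.single_apply,
        Finset.sum_ite_eq', Finset.sum_ite_eq]

variable (u' : L)

lemma Te (i : Fin k) : ⁅u', b (eI i false)⁆ =
    (lam i * b.repr u' (uI k)) • b (eI i true) -
    (lam i * b.repr u' (eI i true)) • b (zI k) := by
  rw [← lie_skew, ← LieAlgebra.ad_apply (R := F), ade lam b hee hue huf h0 i]
  simp only [LinearMap.add_apply, LinearMap.smulRight_apply, Basis.coord_apply]
  module

lemma Tf (i : Fin k) : ⁅u', b (eI i true)⁆ =
    (lam i * b.repr u' (uI k)) • b (eI i false) +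
    (lam i * b.repr u' (eI i false)) • b (zI k) := by
  rw [← lie_skew, ← LieAlgebra.ad_apply (R := F), adf lam b hee hue huf h0 i]
  simp only [LinearMap.add_apply, LinearMap.smulRight_apply, Basis.coord_apply]
  module

lemma Tu : ⁅u', b (uI k)⁆ =
    -∑ i : Fin k, ((lam i * b.repr u' (eI i false)) • b (eI i true) +
      (lam i * b.repr u' (eI i true)) • b (eI i false)) := by
  rw [← lie_skew, ← LieAlgebra.ad_apply (R := F), adu lam b hee hue huf h0]
  rw [LinearMap.sum_apply, neg_inj]
  refine Finset.sum_congr rfl fun i _ => ?_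
  simp only [LinearMap.add_apply, LinearMap.smulRight_apply, Basis.coord_apply]
  module

attribute [local instance] LieRing.ofAssociativeRing

lemma coordu_bracket (x y : L) : b.repr ⁅x, y⁆ (uI k) = 0 := by
  have key : LinearMap.compr₂ (LieAlgebra.ad F L).toLinearMap (b.coord (uI k)) = 0 := by
    apply b.ext
    intro p
    apply b.ext
    intro q
    simp only [LinearMap.compr₂_apply, LieHom.coe_toLinearMap, LieAlgebra.ad_apply,
      Basis.coord_apply, LinearMap.zero_apply]
    by_cases htw : TwPair p q
    · obtain ⟨i, s, hc | hc | hc⟩ := htw <;> obtain ⟨rfl, rfl⟩ := hc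
      · rw [br_pair lam b hee hue huf h0 i s]
        split_ifs <;> simp [Basis.repr_self, Finsupp.single_apply]
      · rw [br_ue lam b hee hue huf h0 i s]
        simp [Basis.repr_self, Finsupp.single_apply]
      · rw [← lie_skew, br_ue lam b hee hue huf h0 i s]
        simp [Basis.repr_self, Finsupp.single_apply]
    · rw [h0 _ _ htw]
      simp
  have := LinearMap.congr_fun (LinearMap.congr_fun key x) y
  simpa [Basis.coord_apply] using this

lemma coordE (i : Fin k) (x : L) :
    b.repr ⁅u', x⁆ (eI i false) =
      lam i * (b.repr u' (uI k) * b.repr x (eI i true) -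
        b.repr u' (eI i true) * b.repr x (uI k)) := by
  have key : (b.coord (eI i false)).comp (LieAlgebra.ad F L u' : L →ₗ[F] L)
      = lam i • ((b.repr u' (uI k)) • b.coord (eI i true) -
        (b.repr u' (eI i true)) • b.coord (uI k)) := by
    apply b.ext
    intro p
    simp only [LinearMap.comp_apply, LieAlgebra.ad_apply, LinearMap.smul_apply,
      LinearMap.sub_apply, Basis.coord_apply, smul_eq_mul]
    rcases p with ⟨⟩ | ⟨⟩ | ⟨j, s⟩
    · rw [br_xz lam b hee hue huf h0]
      simp [Basis.repr_self, Finsupp.single_apply]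
    · rw [Tu lam b hee hue huf h0 u']
      simp [Basis.repr_self, Finsupp.single_apply, Finset.sum_ite_eq',
        Finsupp.finset_sum_apply]
    · cases s
      · rw [Te lam b hee hue huf h0 u' j]
        simp [Basis.repr_self, Finsupp.single_apply]
      · rw [Tf lam b hee hue huf h0 u' j]
        by_cases hji : j = i
        · subst hji; simp [Basis.repr_self, Finsupp.single_apply]
        · simp [Basis.repr_self, Finsupp.single_apply, hji, Ne.symm hji]
  have := LinearMap.congr_fun key x
  simp only [LinearMap.comp_apply, LieAlgebra.ad_apply, LinearMap.smul_apply,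
    LinearMap.sub_apply, Basis.coord_apply, smul_eq_mul] at this
  exact this

lemma coordF (i : Fin k) (x : L) :
    b.repr ⁅u', x⁆ (eI i true) =
      lam i * (b.repr u' (uI k) * b.repr x (eI i false) -
        b.repr u' (eI i false) * b.repr x (uI k)) := by
  have key : (b.coord (eI i true)).comp (LieAlgebra.ad F L u' : L →ₗ[F] L)
      = lam i • ((b.repr u' (uI k)) • b.coord (eI i false) -
        (b.repr u' (eI i false)) • b.coord (uI k)) := by
    apply b.ext
    intro p
    simp only [LinearMap.comp_apply, LieAlgebra.ad_apply, LinearMap.smul_apply,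
      LinearMap.sub_apply, Basis.coord_apply, smul_eq_mul]
    rcases p with ⟨⟩ | ⟨⟩ | ⟨j, s⟩
    · rw [br_xz lam b hee hue huf h0]
      simp [Basis.repr_self, Finsupp.single_apply]
    · rw [Tu lam b hee hue huf h0 u']
      simp [Basis.repr_self, Finsupp.single_apply, Finset.sum_ite_eq',
        Finsupp.finset_sum_apply]
    · cases s
      · rw [Te lam b hee hue huf h0 u' j]
        by_cases hji : j = i
        · subst hji; simp [Basis.repr_self, Finsupp.single_apply]
        · simp [Basis.repr_self, Finsupp.single_apply, hji, Ne.symm hji]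
      · rw [Tf lam b hee hue huf h0 u' j]
        simp [Basis.repr_self, Finsupp.single_apply]
  have := LinearMap.congr_fun key x
  simp only [LinearMap.comp_apply, LieAlgebra.ad_apply, LinearMap.smul_apply,
    LinearMap.sub_apply, Basis.coord_apply, smul_eq_mul] at this
  exact this

end TwAux

open TwAux

set_option maxHeartbeats 1000000 in
/-- In any group grading of the twisted Heisenberg algebra `H_n^λ` over an
algebraically closed field of characteristic zero, if `u'` is a nonzero
homogeneous element of degree `h` not lying in the derived subalgebra `[L,L]`,
then `h` has finite (additive) order in the grading group. -/
theorem twisted_heisenberg_degree_of_u_finite_order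
    (F : Type*) [Field F] [IsAlgClosed F] [CharZero F]
    (L : Type*) [LieRing L] [LieAlgebra F L] (k : ℕ) (hk : 0 < k)
    (lam : Fin k → F) (hlam : ∀ i, lam i ≠ 0)
    (b : Module.Basis (TwIdx k) F L)
    (hee : ∀ i : Fin k, ⁅b (Sum.inr (Sum.inr (i, false))), b (Sum.inr (Sum.inr (i, true)))⁆
      = lam i • b (Sum.inl ()))
    (hue : ∀ i : Fin k, ⁅b (Sum.inr (Sum.inl ())), b (Sum.inr (Sum.inr (i, false)))⁆
      = lam i • b (Sum.inr (Sum.inr (i, true))))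
    (huf : ∀ i : Fin k, ⁅b (Sum.inr (Sum.inl ())), b (Sum.inr (Sum.inr (i, true)))⁆
      = lam i • b (Sum.inr (Sum.inr (i, false))))
    (h0 : ∀ p q : TwIdx k, ¬ TwPair p q → ⁅b p, b q⁆ = 0)
    (G : Type*) [AddCommGroup G] [DecidableEq G]
    (Lg : G → Submodule F L) (hint : DirectSum.IsInternal Lg)
    (hgr : ∀ (g h : G) (x y : L), x ∈ Lg g → y ∈ Lg h → ⁅x, y⁆ ∈ Lg (g + h))
    (u' : L) (hu0 : u' ≠ 0) (h : G) (hu' : u' ∈ Lg h)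
    (hnd : u' ∉ Submodule.span F {w : L | ∃ x y : L, ⁅x, y⁆ = w}) :
    IsOfFinAddOrder h := by
  classical
  by_contra hfin
  set A : Module.End F L := LieAlgebra.ad F L u' with hA
  have hAdef : ∀ x : L, A x = ⁅u', x⁆ := fun x => rfl
  set D : Submodule F L := Submodule.span F {w : L | ∃ x y : L, ⁅x, y⁆ = w} with hD
  -- all elements of D have zero u-coordinate
  have hDu : ∀ v ∈ D, b.repr v (uI k) = 0 := by
    intro v hv
    have hle : D ≤ LinearMap.ker (b.coord (uI k)) := by
      rw [hD, Submodule.span_le]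
      rintro w ⟨x, y, rfl⟩
      simp only [SetLike.mem_coe, LinearMap.mem_ker, Basis.coord_apply]
      exact coordu_bracket lam b hee hue huf h0 x y
    simpa [Basis.coord_apply] using hle hv
  -- basis elements other than u lie in D
  have hbD : ∀ p : TwIdx k, p ≠ uI k → b p ∈ D := by
    intro p hp
    rcases p with ⟨⟩ | ⟨⟩ | ⟨j, s⟩
    · have hz : b (zI k) = (lam ⟨0, hk⟩)⁻¹ • ⁅b (eI ⟨0, hk⟩ false), b (eI ⟨0, hk⟩ true)⁆ := by
        rw [hee ⟨0, hk⟩, smul_smul, inv_mul_cancel₀ (hlam _), one_smul]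
      rw [hz]
      exact Submodule.smul_mem _ _ (Submodule.subset_span ⟨_, _, rfl⟩)
    · exact absurd rfl hp
    · have hz : b (eI j s) = (lam j)⁻¹ • ⁅b (uI k), b (eI j (!s))⁆ := by
        rw [br_ue lam b hee hue huf h0 j (!s), Bool.not_not, smul_smul,
          inv_mul_cancel₀ (hlam _), one_smul]
      rw [hz]
      exact Submodule.smul_mem _ _ (Submodule.subset_span ⟨_, _, rfl⟩)
  -- the u-coordinate of u' is nonzero
  have hc : b.repr u' (uI k) ≠ 0 := by
    intro hc0
    apply hnd
    rw [← b.linearCombination_repr u', Finsupp.linearCombination_apply]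
    refine Submodule.finsuppSum_mem F D (b.repr u') _ fun p _ => ?_
    by_cases hp : p = uI k
    · subst hp; rw [hc0, zero_smul]; exact Submodule.zero_mem _
    · exact Submodule.smul_mem _ _ (hbD p hp)
  -- grading machinery
  letI : DirectSum.Decomposition Lg := hint.chooseDecomposition
  let piL : G → L →ₗ[F] L := fun g => (Lg g).subtype ∘ₗ
    (DirectSum.component F G (fun g' => Lg g') g) ∘ₗ
    (DirectSum.decomposeLinearEquiv Lg).toLinearMap
  have hpi : ∀ (g : G) (x : L), piL g x = ((DirectSum.decompose Lg x) g : L) := fun g x => rfl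
  have hpimem : ∀ (g : G) (x : L), piL g x ∈ Lg g := fun g x => by
    rw [hpi]; exact ((DirectSum.decompose Lg x) g).2
  have hpisame : ∀ (g : G) (x : L), x ∈ Lg g → piL g x = x := fun g x hx => by
    rw [hpi]; exact DirectSum.decompose_of_mem_same Lg hx
  have hpine : ∀ (g g' : G) (x : L), x ∈ Lg g → g ≠ g' → piL g' x = 0 := fun g g' x hx hne => by
    rw [hpi]; exact DirectSum.decompose_of_mem_ne Lg hx hne
  have hpisum : ∀ x : L, ∑ g ∈ (DirectSum.decompose Lg x).support, piL g x = x := fun x => by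
    simp only [hpi]; exact DirectSum.sum_support_decompose Lg x
  have lie_sum₁ : ∀ (x0 : L) (s : Finset G) (f : G → L),
      ⁅x0, ∑ g' ∈ s, f g'⁆ = ∑ g' ∈ s, ⁅x0, f g'⁆ := fun x0 s f => by
    have := map_sum (LieAlgebra.ad F L x0) f s
    simpa only [LieAlgebra.ad_apply] using this
  have lie_sum₂ : ∀ (y0 : L) (s : Finset G) (f : G → L),
      ⁅∑ g' ∈ s, f g', y0⁆ = ∑ g' ∈ s, ⁅f g', y0⁆ := by
    intro y0 s f
    rw [← lie_skew, lie_sum₁, ← Finset.sum_neg_distrib]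
    exact Finset.sum_congr rfl fun g' _ => lie_skew _ _
  -- commutation of projections with ad u'
  have hcomm : ∀ (g : G) (x : L), piL (h + g) ⁅u', x⁆ = ⁅u', piL g x⁆ := by
    have step1 : ∀ (g g' : G) (w : L), w ∈ Lg g' →
        piL (h + g) ⁅u', w⁆ = ⁅u', piL g w⁆ := by
      intro g g' w hw
      by_cases hgg : g' = g
      · subst hgg
        rw [hpisame _ _ hw, hpisame _ _ (hgr h g' u' w hu' hw)]
      · rw [hpine _ _ _ (hgr h g' u' w hu' hw) fun hcon => hgg (add_left_cancel hcon),
          hpine _ _ _ hw hgg, lie_zero]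
    intro g x
    calc piL (h + g) ⁅u', x⁆
        = piL (h + g) ⁅u', ∑ g' ∈ (DirectSum.decompose Lg x).support, piL g' x⁆ := by
          rw [hpisum]
      _ = ∑ g' ∈ (DirectSum.decompose Lg x).support, piL (h + g) ⁅u', piL g' x⁆ := by
          rw [lie_sum₁, map_sum]
      _ = ∑ g' ∈ (DirectSum.decompose Lg x).support, ⁅u', piL g (piL g' x)⁆ :=
          Finset.sum_congr rfl fun g' _ => step1 g g' _ (hpimem g' x)
      _ = ⁅u', piL g x⁆ := by rw [← lie_sum₁, ← map_sum, hpisum]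
  -- D is graded
  have hDgr : ∀ (g : G) (v : L), v ∈ D → piL g v ∈ D := by
    intro g v hv
    rw [hD] at hv ⊢
    refine Submodule.span_induction ?_ ?_ ?_ ?_ hv
    · rintro w ⟨x, y, rfl⟩
      have hone : ∀ (g1 g2 : G) (a b' : L), a ∈ Lg g1 → b' ∈ Lg g2 →
          piL g ⁅a, b'⁆ ∈ Submodule.span F {w : L | ∃ x y : L, ⁅x, y⁆ = w} := by
        intro g1 g2 a b' ha hb
        by_cases hsum : g1 + g2 = g
        · rw [hpisame _ _ (hsum ▸ hgr g1 g2 a b' ha hb)]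
          exact Submodule.subset_span ⟨a, b', rfl⟩
        · rw [hpine _ _ _ (hgr g1 g2 a b' ha hb) hsum]
          exact Submodule.zero_mem _
      have e1 : piL g ⁅x, y⁆ = ∑ g1 ∈ (DirectSum.decompose Lg x).support,
          ∑ g2 ∈ (DirectSum.decompose Lg y).support, piL g ⁅piL g1 x, piL g2 y⁆ := by
        conv_lhs => rw [← hpisum x, ← hpisum y]
        rw [lie_sum₂, map_sum]
        refine Finset.sum_congr rfl fun g1 _ => ?_
        rw [lie_sum₁, map_sum]
      rw [e1]
      exact Submodule.sum_mem _ fun g1 _ => Submodule.sum_mem _ fun g2 _ =>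
        hone g1 g2 _ _ (hpimem g1 x) (hpimem g2 y)
    · rw [map_zero]; exact Submodule.zero_mem _
    · intro a b' _ _ ha hb; rw [map_add]; exact Submodule.add_mem _ ha hb
    · intro t a _ ha; rw [map_smul]; exact Submodule.smul_mem _ _ ha
  -- V = A(D)
  set V : Submodule F L := Submodule.map (A : L →ₗ[F] L) D with hV
  have hSA : ∀ x : L, A x ∈ D := fun x => Submodule.subset_span ⟨u', x, rfl⟩
  have hVmem : ∀ v ∈ V, ∃ d ∈ D, A d = v := by
    intro v hv
    rcases hv with ⟨d, hd, rfl⟩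
    exact ⟨d, hd, rfl⟩
  -- V is graded
  have hVgr : ∀ (g : G) (v : L), v ∈ V → piL g v ∈ V := by
    intro g v hv
    obtain ⟨d, hd, rfl⟩ := hVmem v hv
    have e1 : h + (-h + g) = g := add_neg_cancel_left h g
    have e2 := hcomm (-h + g) d
    rw [e1] at e2
    rw [hAdef, e2]
    exact ⟨piL (-h + g) d, hDgr _ _ hd, rfl⟩
  -- A is injective on V
  have hinj : ∀ v ∈ V, A v = 0 → v = 0 := by
    intro v hv hAv
    obtain ⟨d, hd, rfl⟩ := hVmem v hv
    have hdu : b.repr d (uI k) = 0 := hDu d hd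
    have hAdu : b.repr (A d) (uI k) = 0 := coordu_bracket lam b hee hue huf h0 u' d
    have hAe : ∀ i : Fin k, b.repr (A d) (Sum.inr (Sum.inr (i, false))) = 0 := by
      intro i
      have h1 := coordE lam b hee hue huf h0 u' i (A d)
      rw [← hAdef, hAv] at h1
      simp only [map_zero, Finsupp.coe_zero, Pi.zero_apply] at h1
      have h2 := coordF lam b hee hue huf h0 u' i (A d)
      rw [← hAdef, hAv] at h2
      simp only [map_zero, Finsupp.coe_zero, Pi.zero_apply] at h2
      -- h2 : 0 = lam i * (c * repr (A d) (e_i) - r * repr (A d) u)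
      rw [hAdu, mul_zero, sub_zero] at h2
      rcases mul_eq_zero.mp h2.symm with hbad | h3
      · exact absurd hbad (hlam i)
      rcases mul_eq_zero.mp h3 with hbad | h4
      · exact absurd hbad hc
      exact h4
    have hAf : ∀ i : Fin k, b.repr (A d) (Sum.inr (Sum.inr (i, true))) = 0 := by
      intro i
      have h1 := coordE lam b hee hue huf h0 u' i (A d)
      rw [← hAdef, hAv] at h1
      simp only [map_zero, Finsupp.coe_zero, Pi.zero_apply] at h1
      rw [hAdu, mul_zero, sub_zero] at h1
      rcases mul_eq_zero.mp h1.symm with hbad | h3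
      · exact absurd hbad (hlam i)
      rcases mul_eq_zero.mp h3 with hbad | h4
      · exact absurd hbad hc
      exact h4
    have hde : ∀ i : Fin k, b.repr d (Sum.inr (Sum.inr (i, false))) = 0 := by
      intro i
      have h2 := coordF lam b hee hue huf h0 u' i d
      rw [← hAdef] at h2
      rw [hAf i, hdu, mul_zero, sub_zero] at h2
      rcases mul_eq_zero.mp h2.symm with hbad | h3
      · exact absurd hbad (hlam i)
      rcases mul_eq_zero.mp h3 with hbad | h4
      · exact absurd hbad hc
      exact h4
    have hdf : ∀ i : Fin k, b.repr d (Sum.inr (Sum.inr (i, true))) = 0 := by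
      intro i
      have h1 := coordE lam b hee hue huf h0 u' i d
      rw [← hAdef] at h1
      rw [hAe i, hdu, mul_zero, sub_zero] at h1
      rcases mul_eq_zero.mp h1.symm with hbad | h3
      · exact absurd hbad (hlam i)
      rcases mul_eq_zero.mp h3 with hbad | h4
      · exact absurd hbad hc
      exact h4
    have hdz : d = (b.repr d (zI k)) • b (zI k) := by
      apply b.repr.injective
      rw [map_smul, b.repr_self]
      ext p
      rcases p with ⟨⟩ | ⟨⟩ | ⟨j, s⟩
      · simp [Finsupp.single_apply]
      · simp [Finsupp.single_apply, hdu]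
      · cases s
        · simp [Finsupp.single_apply, hde j]
        · simp [Finsupp.single_apply, hdf j]
    rw [hAdef, hdz, lie_smul, br_xz lam b hee hue huf h0, smul_zero]
  -- a nonzero element of V
  set i0 : Fin k := ⟨0, hk⟩ with hi0
  set v0 : L := A (A (b (eI i0 false))) with hv0def
  have hv0V : v0 ∈ V := ⟨A (b (eI i0 false)), hSA _, rfl⟩
  have hv0 : v0 ≠ 0 := by
    intro hzero
    have e1 : b.repr (A (b (eI i0 false))) (eI i0 true) = lam i0 * b.repr u' (uI k) := by
      have := coordF lam b hee hue huf h0 u' i0 (b (eI i0 false))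
      rw [← hAdef] at this
      simpa [Basis.repr_self, Finsupp.single_apply] using this
    have e2 := coordE lam b hee hue huf h0 u' i0 (A (b (eI i0 false)))
    rw [← hAdef, ← hv0def, hzero] at e2
    simp only [map_zero, Finsupp.coe_zero, Pi.zero_apply] at e2
    have hub : b.repr (A (b (eI i0 false))) (uI k) = 0 := by
      rw [hAdef]; exact coordu_bracket lam b hee hue huf h0 u' (b (eI i0 false))
    rw [e1, hub, mul_zero, sub_zero] at e2
    rcases mul_eq_zero.mp e2.symm with hbad | h3
    · exact absurd hbad (hlam i0)
    rcases mul_eq_zero.mp h3 with hbad | h4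
    · exact absurd hbad hc
    rcases mul_eq_zero.mp h4 with hbad | h5
    · exact absurd hbad (hlam i0)
    exact absurd h5 hc
  -- pick a nonzero homogeneous component of v0
  have hex : ∃ g : G, piL g v0 ≠ 0 := by
    by_contra hall
    push_neg at hall
    apply hv0
    rw [← hpisum v0]
    exact Finset.sum_eq_zero fun g _ => hall g
  obtain ⟨g0, hg0⟩ := hex
  set x0 : L := piL g0 v0 with hx0def
  have hx0V : x0 ∈ V := hVgr g0 v0 hv0V
  have hx0g : x0 ∈ Lg g0 := hpimem g0 v0
  -- the iterates of x0 under A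
  set w : ℕ → L := fun t => (A ^ t) x0 with hw
  have hwfacts : ∀ t : ℕ, w t ∈ V ∧ w t ∈ Lg (t • h + g0) ∧ w t ≠ 0 := by
    intro t
    induction t with
    | zero =>
      refine ⟨?_, ?_, ?_⟩
      · simpa [hw] using hx0V
      · simpa [hw] using hx0g
      · simpa [hw] using hg0
    | succ t ih =>
      have hstep : w (t + 1) = A (w t) := by
        rw [hw]
        simp only [pow_succ']
        rfl
      refine ⟨?_, ?_, ?_⟩
      · rw [hstep]
        obtain ⟨d, hd, hdv⟩ := hVmem (w t) ih.1
        exact ⟨A d, hSA d, by rw [hdv]⟩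
      · rw [hstep, hAdef]
        have := hgr h (t • h + g0) u' (w t) hu' ih.2.1
        have e3 : h + (t • h + g0) = (t + 1) • h + g0 := by
          rw [succ_nsmul]; abel
        rwa [e3] at this
      · intro hzero
        exact ih.2.2 (hinj (w t) ih.1 (by rw [← hstep]; exact hzero))
  -- the degrees are pairwise distinct
  have hdeg : Function.Injective (fun t : ℕ => t • h + g0) := by
    have key : ∀ a c : ℕ, a < c → ¬ (a • h = c • h) := by
      intro a c hlt hEq
      apply hfin
      refine isOfFinAddOrder_iff_nsmul_eq_zero.mpr ⟨c - a, by omega, ?_⟩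
      have e4 : (c - a) • h + a • h = a • h := by
        rw [← add_nsmul, Nat.sub_add_cancel hlt.le, ← hEq]
      exact add_right_cancel (e4.trans (zero_add (a • h)).symm)
    intro a c hac
    simp only at hac
    have h1 : a • h = c • h := add_right_cancel hac
    rcases lt_trichotomy a c with hlt | heq | hgt
    · exact absurd h1 (key a c hlt)
    · exact heq
    · exact absurd h1.symm (key c a hgt)
  -- linear independence of infinitely many vectors: contradiction
  have hind : iSupIndep (fun t : ℕ => Lg (t • h + g0)) :=
    (hint.submodule_iSupIndep).comp hdeg
  have hli : LinearIndependent F w :=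
    iSupIndep.linearIndependent _ hind (fun t => (hwfacts t).2.1) (fun t => (hwfacts t).2.2)
  have : Module.Finite F L := Module.Finite.of_basis b
  exact Module.Finite.not_linearIndependent_of_infinite w hli
end

section
/- For any group grading of the twisted Heisenberg algebra H_n^λ over an algebraically closed field of characteristic zero, there exists a basis {z, u', u'_1, v'_1, …, u'_k, v'_k} of H_n^λ with u' a homogeneous element of the grading, such that the only nonzero brackets are [u',u'_i] = λ_i u'_i, [u',v'_i] = -λ_i v'_i, and [u'_i,v'_i] = -2λ_i z. -/
def TwElt {k : ℕ} {L : Type*} (z u : L) (e f : Fin k → L) : TwIdx k → L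
  | Sum.inl _ => z
  | Sum.inr (Sum.inl _) => u
  | Sum.inr (Sum.inr (i, false)) => e i
  | Sum.inr (Sum.inr (i, true)) => f i

def twC {F L : Type*} [Field F] [AddCommGroup L] [Module F L] {k : ℕ}
    (z u' : L) (e f : Fin k → L) (ca cb : Fin k → F) : TwIdx k → L
  | Sum.inl _ => z
  | Sum.inr (Sum.inl _) => u'
  | Sum.inr (Sum.inr (i, false)) => e i + f i + (ca i - cb i) • z
  | Sum.inr (Sum.inr (i, true)) => e i - f i + (ca i + cb i) • z

noncomputable def twG {F L : Type*} [Field F] [AddCommGroup L] [Module F L] {k : ℕ}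
    (z u : L) (e f : Fin k → L) (ca cb : Fin k → F) (cz : F) : TwIdx k → L
  | Sum.inl _ => z
  | Sum.inr (Sum.inl _) => u - cz • z
      - ∑ i : Fin k, (((ca i + cb i) / 2) • e i + ((ca i - cb i) / 2) • f i
          + (cb i ^ 2 - ca i ^ 2) • z)
  | Sum.inr (Sum.inr (i, false)) => (2⁻¹ : F) • (e i + f i) - ca i • z
  | Sum.inr (Sum.inr (i, true)) => (2⁻¹ : F) • (e i - f i) + cb i • z

noncomputable def lieR {F L : Type*} [CommRing F] [LieRing L] [LieAlgebra F L]
    (y : L) : L →ₗ[F] L where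
  toFun x := ⁅x, y⁆
  map_add' a b := add_lie a b y
  map_smul' t a := smul_lie t a y

lemma not_twpair_z_left {k : ℕ} (q : TwIdx k) : ¬ TwPair (Sum.inl ()) q := by
  rintro ⟨i, s, (⟨h, _⟩ | ⟨h, _⟩ | ⟨h, _⟩)⟩ <;> simp at h

lemma not_twpair_ee {k : ℕ} (i j : Fin k) (s t : Bool) (h : ¬(i = j ∧ t = !s)) :
    ¬ TwPair (Sum.inr (Sum.inr (i, s))) (Sum.inr (Sum.inr (j, t))) := by
  rintro ⟨i', s', (⟨h1, h2⟩ | ⟨h1, _⟩ | ⟨_, h2⟩)⟩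
  · simp only [Sum.inr.injEq, Prod.mk.injEq] at h1 h2
    exact h ⟨h1.1.trans h2.1.symm, by rw [h2.2, h1.2]⟩
  · simp at h1
  · simp at h2

theorem tw_aux (F : Type*) [Field F] [CharZero F]
    (L : Type*) [LieRing L] [LieAlgebra F L] {k : ℕ}
    (lam : Fin k → F) (z u : L) (e f : Fin k → L)
    (b : Module.Basis (TwIdx k) F L)
    (hb : ∀ p, b p = TwElt z u e f p)
    (hee : ∀ i, ⁅e i, f i⁆ = lam i • z)
    (hue : ∀ i, ⁅u, e i⁆ = lam i • f i)
    (huf : ∀ i, ⁅u, f i⁆ = lam i • e i)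
    (h0 : ∀ p q : TwIdx k, ¬ TwPair p q → ⁅TwElt z u e f p, TwElt z u e f q⁆ = 0)
    (u' : L) (hu1 : b.repr u' (Sum.inr (Sum.inl ())) = 1) :
    ∃ c : Module.Basis (TwIdx k) F L,
      c (Sum.inl ()) = z ∧
      c (Sum.inr (Sum.inl ())) = u' ∧
      (∀ i : Fin k, ⁅c (Sum.inr (Sum.inl ())), c (Sum.inr (Sum.inr (i, false)))⁆
        = lam i • c (Sum.inr (Sum.inr (i, false)))) ∧
      (∀ i : Fin k, ⁅c (Sum.inr (Sum.inl ())), c (Sum.inr (Sum.inr (i, true)))⁆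
        = -(lam i) • c (Sum.inr (Sum.inr (i, true)))) ∧
      (∀ i : Fin k, ⁅c (Sum.inr (Sum.inr (i, false))), c (Sum.inr (Sum.inr (i, true)))⁆
        = (-(2 : F) * lam i) • c (Sum.inl ())) ∧
      (∀ p q : TwIdx k, ¬ TwPair p q → ⁅c p, c q⁆ = 0) := by
  classical
  have hbz : b (Sum.inl ()) = z := hb _
  have hbu : b (Sum.inr (Sum.inl ())) = u := hb _
  have hbe : ∀ i, b (Sum.inr (Sum.inr (i, false))) = e i := fun i => hb _
  have hbf : ∀ i, b (Sum.inr (Sum.inr (i, true))) = f i := fun i => hb _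
  obtain ⟨ca, hca⟩ : ∃ ca : Fin k → F, ∀ i, b.repr u' (Sum.inr (Sum.inr (i, false))) = ca i :=
    ⟨_, fun _ => rfl⟩
  obtain ⟨cb, hcb⟩ : ∃ cb : Fin k → F, ∀ i, b.repr u' (Sum.inr (Sum.inr (i, true))) = cb i :=
    ⟨_, fun _ => rfl⟩
  obtain ⟨cz, hcz⟩ : ∃ cz : F, b.repr u' (Sum.inl ()) = cz := ⟨_, rfl⟩
  -- z is central
  have hzl : ∀ x : L, ⁅z, x⁆ = 0 := by
    intro x
    show (LieAlgebra.ad F L z) x = 0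
    conv_lhs => rw [← b.sum_repr x]
    rw [map_sum]
    refine Finset.sum_eq_zero fun j _ => ?_
    rw [map_smul]
    have hj : (LieAlgebra.ad F L z) (b j) = 0 := by
      show ⁅z, b j⁆ = 0
      rw [hb j]
      exact h0 (Sum.inl ()) j (not_twpair_z_left j)
    rw [hj, smul_zero]
  have hzr : ∀ x : L, ⁅x, z⁆ = 0 := fun x => by rw [← lie_skew, hzl, neg_zero]
  -- zero brackets among the e's and f's
  have hee0 : ∀ i j, ⁅e i, e j⁆ = 0 := fun i j =>
    h0 (Sum.inr (Sum.inr (i, false))) (Sum.inr (Sum.inr (j, false)))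
      (not_twpair_ee _ _ _ _ (by simp))
  have hff0 : ∀ i j, ⁅f i, f j⁆ = 0 := fun i j =>
    h0 (Sum.inr (Sum.inr (i, true))) (Sum.inr (Sum.inr (j, true)))
      (not_twpair_ee _ _ _ _ (by simp))
  have hef0 : ∀ i j, i ≠ j → ⁅e i, f j⁆ = 0 := fun i j hij =>
    h0 (Sum.inr (Sum.inr (i, false))) (Sum.inr (Sum.inr (j, true)))
      (not_twpair_ee _ _ _ _ (fun h => hij h.1))
  have hfe0 : ∀ i j, i ≠ j → ⁅f i, e j⁆ = 0 := fun i j hij =>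
    h0 (Sum.inr (Sum.inr (i, true))) (Sum.inr (Sum.inr (j, false)))
      (not_twpair_ee _ _ _ _ (fun h => hij h.1))
  have hfe : ∀ i, ⁅f i, e i⁆ = -(lam i) • z := fun i => by
    rw [← lie_skew, hee, neg_smul]
  -- expansion of u'
  have hexp : u' = cz • z + u + ∑ i : Fin k, (cb i • f i + ca i • e i) := by
    conv_lhs => rw [← b.sum_repr u']
    rw [Fintype.sum_sum_type, Fintype.sum_sum_type, Fintype.sum_prod_type]
    simp only [Fintype.sum_bool, Finset.univ_unique, Finset.sum_singleton]
    simp only [hbz, hbu, hbe, hbf, hu1, hca, hcb, hcz, one_smul]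
    abel
  -- brackets of u' with e j and f j
  have hbe' : ∀ j, ⁅u', e j⁆ = lam j • f j - (cb j * lam j) • z := by
    intro j
    conv_lhs => rw [hexp]
    rw [add_lie, add_lie, smul_lie, hzl, smul_zero, hue j]
    rw [show ⁅∑ i : Fin k, (cb i • f i + ca i • e i), e j⁆
        = ∑ i : Fin k, ⁅cb i • f i + ca i • e i, e j⁆ from map_sum (lieR (F := F) (e j)) _ _]
    rw [Finset.sum_eq_single j
      (fun i _ hij => by
        rw [add_lie, smul_lie, smul_lie, hfe0 i j hij, hee0 i j, smul_zero, smul_zero, add_zero])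
      (fun h => absurd (Finset.mem_univ j) h)]
    rw [add_lie, smul_lie, smul_lie, hfe j, hee0 j j, smul_zero, add_zero]
    match_scalars <;> ring
  have hbf' : ∀ j, ⁅u', f j⁆ = lam j • e j + (ca j * lam j) • z := by
    intro j
    conv_lhs => rw [hexp]
    rw [add_lie, add_lie, smul_lie, hzl, smul_zero, huf j]
    rw [show ⁅∑ i : Fin k, (cb i • f i + ca i • e i), f j⁆
        = ∑ i : Fin k, ⁅cb i • f i + ca i • e i, f j⁆ from map_sum (lieR (F := F) (f j)) _ _]
    rw [Finset.sum_eq_single j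
      (fun i _ hij => by
        rw [add_lie, smul_lie, smul_lie, hff0 i j, hef0 i j hij, smul_zero, smul_zero, add_zero])
      (fun h => absurd (Finset.mem_univ j) h)]
    rw [add_lie, smul_lie, smul_lie, hff0 j j, hee j, smul_zero, zero_add]
    match_scalars <;> ring
  -- the change-of-basis maps
  have hTz : (b.constr F (twC z u' e f ca cb)) z = z := by
    have h := b.constr_basis F (twC z u' e f ca cb) (Sum.inl ())
    rw [hbz] at h; exact h
  have hTu : (b.constr F (twC z u' e f ca cb)) u = u' := by
    have h := b.constr_basis F (twC z u' e f ca cb) (Sum.inr (Sum.inl ()))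
    rw [hbu] at h; exact h
  have hTe : ∀ i, (b.constr F (twC z u' e f ca cb)) (e i) = e i + f i + (ca i - cb i) • z := by
    intro i
    have h := b.constr_basis F (twC z u' e f ca cb) (Sum.inr (Sum.inr (i, false)))
    rw [hbe i] at h; exact h
  have hTf : ∀ i, (b.constr F (twC z u' e f ca cb)) (f i) = e i - f i + (ca i + cb i) • z := by
    intro i
    have h := b.constr_basis F (twC z u' e f ca cb) (Sum.inr (Sum.inr (i, true)))
    rw [hbf i] at h; exact h
  have hSz : (b.constr F (twG z u e f ca cb cz)) z = z := by
    have h := b.constr_basis F (twG z u e f ca cb cz) (Sum.inl ())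
    rw [hbz] at h; exact h
  have hSu : (b.constr F (twG z u e f ca cb cz)) u = u - cz • z
      - ∑ i : Fin k, (((ca i + cb i) / 2) • e i + ((ca i - cb i) / 2) • f i
          + (cb i ^ 2 - ca i ^ 2) • z) := by
    have h := b.constr_basis F (twG z u e f ca cb cz) (Sum.inr (Sum.inl ()))
    rw [hbu] at h; exact h
  have hSe : ∀ i, (b.constr F (twG z u e f ca cb cz)) (e i)
      = (2⁻¹ : F) • (e i + f i) - ca i • z := by
    intro i
    have h := b.constr_basis F (twG z u e f ca cb cz) (Sum.inr (Sum.inr (i, false)))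
    rw [hbe i] at h; exact h
  have hSf : ∀ i, (b.constr F (twG z u e f ca cb cz)) (f i)
      = (2⁻¹ : F) • (e i - f i) + cb i • z := by
    intro i
    have h := b.constr_basis F (twG z u e f ca cb cz) (Sum.inr (Sum.inr (i, true)))
    rw [hbf i] at h; exact h
  have hTS : (b.constr F (twC z u' e f ca cb)).comp (b.constr F (twG z u e f ca cb cz))
      = LinearMap.id := by
    apply b.ext
    rintro (⟨⟩ | ⟨⟩ | ⟨i, (_ | _)⟩)
    · rw [LinearMap.comp_apply, LinearMap.id_apply, hbz, hSz, hTz]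
    · rw [LinearMap.comp_apply, LinearMap.id_apply, hbu, hSu]
      rw [map_sub, map_sub, map_smul, map_sum, hTu, hTz]
      simp only [map_add, map_smul, hTe, hTf, hTz]
      rw [show (∑ i : Fin k, (((ca i + cb i) / 2) • (e i + f i + (ca i - cb i) • z)
            + ((ca i - cb i) / 2) • (e i - f i + (ca i + cb i) • z)
            + (cb i ^ 2 - ca i ^ 2) • z))
          = ∑ i : Fin k, (cb i • f i + ca i • e i) from
        Finset.sum_congr rfl fun i _ => by match_scalars <;> field_simp <;> ring]
      rw [hexp]
      abel
    · rw [LinearMap.comp_apply, LinearMap.id_apply, hbe i, hSe i]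
      simp only [map_sub, map_add, map_smul, hTe, hTf, hTz]
      match_scalars <;> field_simp <;> ring
    · rw [LinearMap.comp_apply, LinearMap.id_apply, hbf i, hSf i]
      simp only [map_sub, map_add, map_smul, hTe, hTf, hTz]
      match_scalars <;> field_simp <;> ring
  have hST : (b.constr F (twG z u e f ca cb cz)).comp (b.constr F (twC z u' e f ca cb))
      = LinearMap.id := by
    apply b.ext
    rintro (⟨⟩ | ⟨⟩ | ⟨i, (_ | _)⟩)
    · rw [LinearMap.comp_apply, LinearMap.id_apply, hbz, hTz, hSz]
    · rw [LinearMap.comp_apply, LinearMap.id_apply, hbu, hTu]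
      conv_lhs => rw [hexp]
      rw [map_add, map_add, map_smul, map_sum, hSz, hSu]
      simp only [map_add, map_smul, hSe, hSf]
      rw [show (∑ i : Fin k, (cb i • ((2⁻¹ : F) • (e i - f i) + cb i • z)
            + ca i • ((2⁻¹ : F) • (e i + f i) - ca i • z)))
          = ∑ i : Fin k, (((ca i + cb i) / 2) • e i + ((ca i - cb i) / 2) • f i
            + (cb i ^ 2 - ca i ^ 2) • z) from
        Finset.sum_congr rfl fun i _ => by match_scalars <;> field_simp <;> ring]
      abel
    · rw [LinearMap.comp_apply, LinearMap.id_apply, hbe i, hTe i]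
      simp only [map_sub, map_add, map_smul, hSe, hSf, hSz]
      match_scalars <;> field_simp <;> ring
    · rw [LinearMap.comp_apply, LinearMap.id_apply, hbf i, hTf i]
      simp only [map_sub, map_add, map_smul, hSe, hSf, hSz]
      match_scalars <;> field_simp <;> ring
  -- the new basis
  set c : Module.Basis (TwIdx k) F L := b.map (LinearEquiv.ofLinear (b.constr F (twC z u' e f ca cb))
      (b.constr F (twG z u e f ca cb cz)) hTS hST) with hcdef
  have hc : ∀ p, c p = twC z u' e f ca cb p := fun p => by
    rw [hcdef, Module.Basis.map_apply]
    exact b.constr_basis F _ p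
  have hc1 : c (Sum.inl ()) = z := hc _
  have hc2 : c (Sum.inr (Sum.inl ())) = u' := hc _
  have hcF : ∀ i, c (Sum.inr (Sum.inr (i, false))) = e i + f i + (ca i - cb i) • z :=
    fun i => hc _
  have hcT : ∀ i, c (Sum.inr (Sum.inr (i, true))) = e i - f i + (ca i + cb i) • z :=
    fun i => hc _
  refine ⟨c, hc1, hc2, ?_, ?_, ?_, ?_⟩
  · intro i
    rw [hc2, hcF i, lie_add, lie_add, lie_smul, hzr, smul_zero, hbe' i, hbf' i]
    match_scalars <;> ring
  · intro i
    rw [hc2, hcT i, lie_add, lie_sub, lie_smul, hzr, smul_zero, hbe' i, hbf' i]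
    match_scalars <;> ring
  · intro i
    rw [hcF i, hcT i, hc1]
    simp only [lie_add, add_lie, lie_sub, sub_lie, lie_smul, smul_lie, hzl, hzr,
      hee0, hff0, hee, hfe, smul_zero, zero_add, add_zero, sub_zero, zero_sub, neg_zero]
    match_scalars <;> ring
  · rintro (⟨⟩ | ⟨⟩ | ⟨i, s⟩) (⟨⟩ | ⟨⟩ | ⟨j, t⟩) hnp
    · rw [hc1]; exact hzl _
    · rw [hc1]; exact hzl _
    · rw [hc1]; exact hzl _
    · rw [hc1]; exact hzr _
    · exact lie_self _
    · exact absurd (show TwPair _ _ from ⟨j, t, Or.inr (Or.inl ⟨rfl, rfl⟩)⟩) hnp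
    · rw [hc1]; exact hzr _
    · exact absurd (show TwPair _ _ from ⟨i, s, Or.inr (Or.inr ⟨rfl, rfl⟩)⟩) hnp
    · by_cases hij : i = j
      · subst hij
        have hts : t = s := by
          have hns : t ≠ !s := fun h => hnp ⟨i, s, Or.inl ⟨rfl, by rw [h]⟩⟩
          cases s <;> cases t
          · rfl
          · exact absurd rfl hns
          · exact absurd rfl hns
          · rfl
        subst hts
        exact lie_self _
      · cases s <;> cases t <;>
          simp only [hcF, hcT] <;>
          simp [lie_add, add_lie, lie_sub, sub_lie, lie_smul, smul_lie, hzl, hzr,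
            hee0, hff0, hef0 i j hij, hfe0 i j hij]

/-- Lemma 6.3: for any group grading of the twisted Heisenberg algebra
`H_n^λ`, there is a basis `{z, u', u'_1, v'_1, …, u'_k, v'_k}` with `u'`
homogeneous, whose only nonzero brackets are `[u',u'_i] = λ_i u'_i`,
`[u',v'_i] = -λ_i v'_i` and `[u'_i,v'_i] = -2λ_i z`. -/
theorem twisted_heisenberg_grading_u_homogeneous
    (F : Type*) [Field F] [IsAlgClosed F] [CharZero F]
    (L : Type*) [LieRing L] [LieAlgebra F L] (k : ℕ) (hk : 0 < k)
    (lam : Fin k → F) (hlam : ∀ i, lam i ≠ 0)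
    (b : Module.Basis (TwIdx k) F L)
    (hee : ∀ i : Fin k, ⁅b (Sum.inr (Sum.inr (i, false))), b (Sum.inr (Sum.inr (i, true)))⁆
      = lam i • b (Sum.inl ()))
    (hue : ∀ i : Fin k, ⁅b (Sum.inr (Sum.inl ())), b (Sum.inr (Sum.inr (i, false)))⁆
      = lam i • b (Sum.inr (Sum.inr (i, true))))
    (huf : ∀ i : Fin k, ⁅b (Sum.inr (Sum.inl ())), b (Sum.inr (Sum.inr (i, true)))⁆
      = lam i • b (Sum.inr (Sum.inr (i, false))))
    (h0 : ∀ p q : TwIdx k, ¬ TwPair p q → ⁅b p, b q⁆ = 0)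
    (G : Type*) [AddCommGroup G] [DecidableEq G]
    (Lg : G → Submodule F L) (hint : DirectSum.IsInternal Lg)
    (hgr : ∀ (g h : G) (x y : L), x ∈ Lg g → y ∈ Lg h → ⁅x, y⁆ ∈ Lg (g + h)) :
    ∃ c : Module.Basis (TwIdx k) F L,
      c (Sum.inl ()) = b (Sum.inl ()) ∧
      (∃ g : G, c (Sum.inr (Sum.inl ())) ∈ Lg g) ∧
      (∀ i : Fin k, ⁅c (Sum.inr (Sum.inl ())), c (Sum.inr (Sum.inr (i, false)))⁆
        = lam i • c (Sum.inr (Sum.inr (i, false)))) ∧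
      (∀ i : Fin k, ⁅c (Sum.inr (Sum.inl ())), c (Sum.inr (Sum.inr (i, true)))⁆
        = -(lam i) • c (Sum.inr (Sum.inr (i, true)))) ∧
      (∀ i : Fin k, ⁅c (Sum.inr (Sum.inr (i, false))), c (Sum.inr (Sum.inr (i, true)))⁆
        = (-(2 : F) * lam i) • c (Sum.inl ())) ∧
      (∀ p q : TwIdx k, ¬ TwPair p q → ⁅c p, c q⁆ = 0) := by
  classical
  -- find a homogeneous element with nonzero `u`-coordinate
  have hexists : ∃ (g : G) (x : L), x ∈ Lg g ∧ b.repr x (Sum.inr (Sum.inl ())) ≠ 0 := by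
    by_contra hcon
    push_neg at hcon
    have hker : ∀ g, Lg g ≤ LinearMap.ker (b.coord (Sum.inr (Sum.inl ()))) := by
      intro g x hx
      simp only [LinearMap.mem_ker, Module.Basis.coord_apply]
      exact hcon g x hx
    have htop : (⊤ : Submodule F L) ≤ LinearMap.ker (b.coord (Sum.inr (Sum.inl ()))) :=
      hint.submodule_iSup_eq_top ▸ iSup_le hker
    have := htop (Submodule.mem_top : b (Sum.inr (Sum.inl ())) ∈ ⊤)
    simp [Module.Basis.coord_apply, Module.Basis.repr_self] at this
  obtain ⟨g, x, hxg, hx0⟩ := hexists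
  set t : F := b.repr x (Sum.inr (Sum.inl ())) with ht
  have hu1 : b.repr (t⁻¹ • x) (Sum.inr (Sum.inl ())) = 1 := by
    rw [map_smul]
    simp [← ht, inv_mul_cancel₀ hx0]
  have hb : ∀ p, b p = TwElt (b (Sum.inl ())) (b (Sum.inr (Sum.inl ())))
      (fun i => b (Sum.inr (Sum.inr (i, false)))) (fun i => b (Sum.inr (Sum.inr (i, true)))) p := by
    rintro (⟨⟩ | ⟨⟩ | ⟨i, (_ | _)⟩) <;> rfl
  have h0' : ∀ p q : TwIdx k, ¬ TwPair p q →
      ⁅TwElt (b (Sum.inl ())) (b (Sum.inr (Sum.inl ())))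
        (fun i => b (Sum.inr (Sum.inr (i, false)))) (fun i => b (Sum.inr (Sum.inr (i, true)))) p,
       TwElt (b (Sum.inl ())) (b (Sum.inr (Sum.inl ())))
        (fun i => b (Sum.inr (Sum.inr (i, false)))) (fun i => b (Sum.inr (Sum.inr (i, true)))) q⁆ = 0 := by
    intro p q h
    have := h0 p q h
    rwa [hb p, hb q] at this
  obtain ⟨c, hc1, hc2, hc3, hc4, hc5, hc6⟩ :=
    tw_aux F L lam (b (Sum.inl ())) (b (Sum.inr (Sum.inl ())))
      (fun i => b (Sum.inr (Sum.inr (i, false)))) (fun i => b (Sum.inr (Sum.inr (i, true))))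
      b hb hee hue huf h0' (t⁻¹ • x) hu1
  exact ⟨c, hc1, ⟨g, hc2 ▸ Submodule.smul_mem _ _ hxg⟩, hc3, hc4, hc5, hc6⟩
end
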